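/- arXiv:0906.0154 — 4 statements merged into one kernel-verified Lean document; each statement's English description precedes it below -/
import Mathlib

section
/- Let Γ be a finite X-symmetric graph with a nontrivial X-invariant partition B of V(Γ) such that the quotient Γ_B has valency b ≥ 3, Γ is not a multicover of Γ_B, and r = 2. Fix B₀ ∈ B and suppose that Γ(D) ∩ B₀ ∩ Γ(C) ≠ ∅ for every 2-path [D,B₀,C] of Γ_B with middle vertex B₀. Then: Γ_B is (X,2)-arc-transitive; λ := |Γ(D) ∩ B ∩ Γ(C)| is independent of the choice of 2-path [D,B,C] of Γ_B; the set Δ of all 3-arcs (C, B(v), B(u), D) of Γ_B — where (v,u) ∈ Arc(Γ), B(v) and B(u) are the blocks of B containing v and u respectively, C ∈ Γ_B(v) with C ≠ B(u), and D ∈ Γ_B(u) with D ≠ B(v) — is a self-paired X-orbit on Arc₃(Γ_B); and either (a) λ = 1 and Γ ≅ ℷ(Γ_B,Δ), or (b) λ ≥ 2 and Q := {Γ(D) ∩ B ∩ Γ(C) : [D,B,C] a 2-path of Γ_B} is a second nontrivial X-invariant partition of V(Γ) which properly refines B and satisfies Γ_Q ≅ ℷ(Γ_B,Δ). -/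
open Pointwise

/-- A 2-arc `(t.1, t.2.1, t.2.2)` of a simple graph. -/
def IsArc2 {V : Type*} (G : SimpleGraph V) (t : V × V × V) : Prop :=
  G.Adj t.1 t.2.1 ∧ G.Adj t.2.1 t.2.2 ∧ t.1 ≠ t.2.2

/-- A 3-arc `(t.1, t.2.1, t.2.2.1, t.2.2.2)` of a simple graph. -/
def IsArc3 {V : Type*} (G : SimpleGraph V) (t : V × V × V × V) : Prop :=
  G.Adj t.1 t.2.1 ∧ G.Adj t.2.1 t.2.2.1 ∧ G.Adj t.2.2.1 t.2.2.2 ∧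
    t.1 ≠ t.2.2.1 ∧ t.2.1 ≠ t.2.2.2

/-- The reverse of a 3-arc. -/
def rev3 {V : Type*} (t : V × V × V × V) : V × V × V × V :=
  (t.2.2.2, t.2.2.1, t.2.1, t.1)

/-- `G` is regular of valency `d`. -/
def Regular {V : Type*} (G : SimpleGraph V) (d : ℕ) : Prop :=
  ∀ u : V, (G.neighborSet u).ncard = d

/-- The action of `X` preserves the adjacency of `G`. -/
def AdjPres (X : Type*) {V : Type*} [Group X] [MulAction X V] (G : SimpleGraph V) : Prop :=
  ∀ (x : X) (u w : V), G.Adj u w → G.Adj (x • u) (x • w)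

/-- `X` is transitive on the vertices. -/
def VertexTrans (X V : Type*) [Group X] [MulAction X V] : Prop :=
  ∀ u w : V, ∃ x : X, x • u = w

/-- `X` is transitive on the arcs of `G`. -/
def ArcTrans (X : Type*) {V : Type*} [Group X] [MulAction X V] (G : SimpleGraph V) : Prop :=
  ∀ a b : V × V, G.Adj a.1 a.2 → G.Adj b.1 b.2 → ∃ x : X, x • a = b

/-- `G` is `X`-symmetric. -/
def XSymm (X : Type*) {V : Type*} [Group X] [MulAction X V] (G : SimpleGraph V) : Prop :=
  AdjPres X G ∧ VertexTrans X V ∧ ArcTrans X G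

/-- `X` is transitive on the 2-arcs of `G`. -/
def Arc2Trans (X : Type*) {V : Type*} [Group X] [MulAction X V] (G : SimpleGraph V) : Prop :=
  ∀ s t : V × V × V, IsArc2 G s → IsArc2 G t → ∃ x : X, x • s = t

/-- `X` is transitive on the 3-arcs of `G`. -/
def Arc3Trans (X : Type*) {V : Type*} [Group X] [MulAction X V] (G : SimpleGraph V) : Prop :=
  ∀ s t : V × V × V × V, IsArc3 G s → IsArc3 G t → ∃ x : X, x • s = t

/-- `G` is `(X,2)`-arc-transitive. -/
def Arc2TransGraph (X : Type*) {V : Type*} [Group X] [MulAction X V] (G : SimpleGraph V) : Prop :=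
  XSymm X G ∧ Arc2Trans X G

/-- `X` is regular on the 2-arcs of `G`, i.e. `G` is `(X,2)`-arc-regular
(together with `X`-symmetry). -/
def Arc2Reg (X : Type*) {V : Type*} [Group X] [MulAction X V] (G : SimpleGraph V) : Prop :=
  XSymm X G ∧ ∀ s t : V × V × V, IsArc2 G s → IsArc2 G t → ∃! x : X, x • s = t

/-- `Δ` is a self-paired `X`-orbit on the set of 3-arcs of `G`. -/
def SelfPairedOrbit3 (X : Type*) {V : Type*} [Group X] [MulAction X V] (G : SimpleGraph V)
    (Δ : Set (V × V × V × V)) : Prop :=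
  (∀ t ∈ Δ, IsArc3 G t) ∧ (∃ t₀ ∈ Δ, Δ = MulAction.orbit X t₀) ∧ ∀ t ∈ Δ, rev3 t ∈ Δ

/-- `ℓ₁(Δ) = k`:  for each `(τ₁,τ,σ,σ₁) ∈ Δ`, the orbit of `σ₁` under the pointwise
stabilizer of `(τ₁,τ,σ)` in `X` has exactly `k` elements. -/
def Ell1Eq (X : Type*) {V : Type*} [Group X] [MulAction X V]
    (Δ : Set (V × V × V × V)) (k : ℕ) : Prop :=
  ∀ t ∈ Δ, ({u : V | ∃ x : X, x • t.1 = t.1 ∧ x • t.2.1 = t.2.1 ∧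
    x • t.2.2.1 = t.2.2.1 ∧ x • t.2.2.2 = u}).ncard = k

/-- A 2-path of `G`, as an ordered triple with distinct vertices. -/
def Path2 {V : Type*} (G : SimpleGraph V) : Type _ :=
  {p : V × V × V // G.Adj p.1 p.2.1 ∧ G.Adj p.2.1 p.2.2 ∧ p.1 ≠ p.2.2}

/-- The reverse of a 2-path. -/
def p2rev {V : Type*} (G : SimpleGraph V) (p : Path2 G) : Path2 G :=
  ⟨(p.1.2.2, p.1.2.1, p.1.1), p.2.2.1.symm, p.2.1.symm, p.2.2.2.symm⟩

/-- 2-paths of `G` up to reversal. -/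
def P2 {V : Type*} (G : SimpleGraph V) : Type _ :=
  Quot (fun p q : Path2 G => q = p2rev G p)

/-- The 2-path (mod reversal) determined by an ordered 2-path. -/
def P2.mk {V : Type*} (G : SimpleGraph V) (p : Path2 G) : P2 G := Quot.mk _ p

/-- The graph `ℷ(G,Δ)` on the 2-paths of `G`:  `[α₀,α₁,α₂]` is adjacent to
`[α₁,α₂,α₃]` whenever `(α₀,α₁,α₂,α₃) ∈ Δ`. -/
def gimel {V : Type*} (G : SimpleGraph V) (Δ : Set (V × V × V × V)) : SimpleGraph (P2 G) :=
  SimpleGraph.fromRel (fun z w => ∃ p q : Path2 G,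
    z = P2.mk G p ∧ w = P2.mk G q ∧ p.1.2.1 = q.1.1 ∧ p.1.2.2 = q.1.2.1 ∧
    (p.1.1, p.1.2.1, p.1.2.2, q.1.2.2) ∈ Δ)

/-- The block `P_τ` of all 2-paths of `G` with middle vertex `τ`. -/
def PBlock {V : Type*} (G : SimpleGraph V) (τ : V) : Set (P2 G) :=
  {z | ∃ p : Path2 G, z = P2.mk G p ∧ p.1.2.1 = τ}

/-- `x ∈ X` maps the 2-path `z` to the 2-path `w` (under the induced action of `X`
on 2-paths mod reversal). -/
def P2Maps (X : Type*) {V : Type*} [Group X] [MulAction X V] (G : SimpleGraph V)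
    (x : X) (z w : P2 G) : Prop :=
  ∃ p q : Path2 G, z = P2.mk G p ∧ w = P2.mk G q ∧
    (q.1 = x • p.1 ∨ q.1 = x • (p2rev G p).1)

/-- For a graph `H` whose vertices carry an induced `X`-action described by a relation
`M x z w` (“`x` maps `z` to `w`”), `H` is `X`-symmetric:  `X` preserves adjacency and is
transitive on vertices and on arcs. -/
def RelXSymm (X : Type*) {W : Type*} [Group X] (M : X → W → W → Prop)
    (H : SimpleGraph W) : Prop :=
  (∀ (x : X) (z w z' w' : W), H.Adj z w → M x z z' → M x w w' → H.Adj z' w') ∧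
  (∀ z w : W, ∃ x : X, M x z w) ∧
  (∀ z₁ z₂ w₁ w₂ : W, H.Adj z₁ z₂ → H.Adj w₁ w₂ → ∃ x : X, M x z₁ w₁ ∧ M x z₂ w₂)

/-- `X` is transitive on the 2-arcs of `H`, the action being described by `M`. -/
def RelArc2Trans (X : Type*) {W : Type*} [Group X] (M : X → W → W → Prop)
    (H : SimpleGraph W) : Prop :=
  ∀ z₁ z₂ z₃ w₁ w₂ w₃ : W, H.Adj z₁ z₂ → H.Adj z₂ z₃ → z₁ ≠ z₃ →
    H.Adj w₁ w₂ → H.Adj w₂ w₃ → w₁ ≠ w₃ →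
    ∃ x : X, M x z₁ w₁ ∧ M x z₂ w₂ ∧ M x z₃ w₃

/-- `X` is regular on the arcs of `H`, the action being described by `M`. -/
def RelArc1Reg (X : Type*) {W : Type*} [Group X] (M : X → W → W → Prop)
    (H : SimpleGraph W) : Prop :=
  ∀ z₁ z₂ w₁ w₂ : W, H.Adj z₁ z₂ → H.Adj w₁ w₂ →
    ∃! x : X, M x z₁ w₁ ∧ M x z₂ w₂

/-- `X` is regular on the 2-arcs of `H`, the action being described by `M`. -/
def RelArc2Reg (X : Type*) {W : Type*} [Group X] (M : X → W → W → Prop)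
    (H : SimpleGraph W) : Prop :=
  ∀ z₁ z₂ z₃ w₁ w₂ w₃ : W, H.Adj z₁ z₂ → H.Adj z₂ z₃ → z₁ ≠ z₃ →
    H.Adj w₁ w₂ → H.Adj w₂ w₃ → w₁ ≠ w₃ →
    ∃! x : X, M x z₁ w₁ ∧ M x z₂ w₂ ∧ M x z₃ w₃

/-- The neighbourhood `Γ(B) = ⋃_{u ∈ B} Γ(u)` of a set of vertices. -/
def nbhd {V : Type*} (Γ : SimpleGraph V) (B : Set V) : Set V :=
  ⋃ u ∈ B, Γ.neighborSet u

/-- Two sets of vertices are adjacent if they are distinct and joined by an edge. -/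
def QAdj {V : Type*} (Γ : SimpleGraph V) (B C : Set V) : Prop :=
  B ≠ C ∧ ∃ u ∈ B, ∃ w ∈ C, Γ.Adj u w

/-- The quotient graph of `Γ` with respect to a partition `P` of its vertex set. -/
def quotGraph {V : Type*} (Γ : SimpleGraph V) (P : Set (Set V)) : SimpleGraph ↥P :=
  SimpleGraph.fromRel (fun B C => ∃ u ∈ (B : Set V), ∃ w ∈ (C : Set V), Γ.Adj u w)

/-- `P` is an `X`-invariant partition of the vertex set. -/
def XInvariantPartition (X : Type*) {V : Type*} [Group X] [MulAction X V]
    (P : Set (Set V)) : Prop :=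
  Setoid.IsPartition P ∧ ∀ (x : X), ∀ B ∈ P, x • B ∈ P

/-- The partition `P` is nontrivial: `1 < |B| < |V|` for each block `B`. -/
def NontrivialBlocks {V : Type*} [Fintype V] (P : Set (Set V)) : Prop :=
  ∀ B ∈ P, 1 < B.ncard ∧ B.ncard < Fintype.card V

/-- `x ∈ X` maps the block `B` to the block `C`. -/
def BlockMaps (X : Type*) {V : Type*} [Group X] [MulAction X V] (P : Set (Set V))
    (x : X) (B C : ↥P) : Prop :=
  (C : Set V) = x • (B : Set V)

/-- The set `Δ` of 3-arcs `(C, B(v), B(u), D)` of the quotient graph, where `(v,u)` is an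
arc of `Γ`, `C ∈ Γ_B(v) ∖ {B(u)}` and `D ∈ Γ_B(u) ∖ {B(v)}`. -/
def quotDelta {V : Type*} (Γ : SimpleGraph V) (P : Set (Set V)) :
    Set (↥P × ↥P × ↥P × ↥P) :=
  {t | ∃ u w : V, Γ.Adj u w ∧ u ∈ (t.2.1 : Set V) ∧ w ∈ (t.2.2.1 : Set V) ∧
    u ∈ nbhd Γ ↑t.1 ∧ w ∈ nbhd Γ ↑t.2.2.2 ∧ t.1 ≠ t.2.2.1 ∧ t.2.2.2 ≠ t.2.1}

/-- `Δ` is a self-paired `X`-orbit on the 3-arcs of the quotient graph. -/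
def QSelfPairedOrbit3 (X : Type*) {V : Type*} [Group X] [MulAction X V]
    (Γ : SimpleGraph V) (P : Set (Set V)) (Δ : Set (↥P × ↥P × ↥P × ↥P)) : Prop :=
  (∀ t ∈ Δ, IsArc3 (quotGraph Γ P) t) ∧
  (∃ t₀ ∈ Δ, ∀ t, t ∈ Δ ↔ ∃ x : X, BlockMaps X P x t₀.1 t.1 ∧
    BlockMaps X P x t₀.2.1 t.2.1 ∧ BlockMaps X P x t₀.2.2.1 t.2.2.1 ∧
    BlockMaps X P x t₀.2.2.2 t.2.2.2) ∧
  (∀ t ∈ Δ, rev3 t ∈ Δ)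

/-- The refinement `Q = {Γ(D) ∩ B ∩ Γ(C)}` of the partition `P`, indexed by the 2-paths
`[D,B,C]` of the quotient graph. -/
def quotRefine {V : Type*} (Γ : SimpleGraph V) (P : Set (Set V)) : Set (Set V) :=
  {S | ∃ D B C : ↥P, (quotGraph Γ P).Adj D B ∧ (quotGraph Γ P).Adj B C ∧ D ≠ C ∧
    S = nbhd Γ ↑D ∩ ↑B ∩ nbhd Γ ↑C}

set_option maxHeartbeats 4000000 in
theorem quotient_two_arc_transitive_of_r_two {V X : Type*} [Fintype V] [Group X]
    [MulAction X V] (Γ : SimpleGraph V) (hsym : XSymm X Γ)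
    (P : Set (Set V)) (hP : XInvariantPartition X P) (hPnt : NontrivialBlocks P)
    (b : ℕ) (hb : 3 ≤ b) (hqreg : Regular (quotGraph Γ P) b)
    (hnmc : ∀ B C : ↥P, (quotGraph Γ P).Adj B C → nbhd Γ ↑C ∩ ↑B ≠ (↑B : Set V))
    (hr2 : ∀ u : V, ({C : Set V | C ∈ P ∧ u ∈ nbhd Γ C}).ncard = 2)
    (B₀ : ↥P)
    (hsup : ∀ D C : ↥P, (quotGraph Γ P).Adj D B₀ → (quotGraph Γ P).Adj B₀ C → D ≠ C →
      (nbhd Γ ↑D ∩ ↑B₀ ∩ nbhd Γ ↑C).Nonempty) :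
    RelXSymm X (BlockMaps X P) (quotGraph Γ P) ∧
    RelArc2Trans X (BlockMaps X P) (quotGraph Γ P) ∧
    QSelfPairedOrbit3 X Γ P (quotDelta Γ P) ∧
    ∃ lam : ℕ,
      (∀ D B C : ↥P, (quotGraph Γ P).Adj D B → (quotGraph Γ P).Adj B C → D ≠ C →
        (nbhd Γ ↑D ∩ ↑B ∩ nbhd Γ ↑C).ncard = lam) ∧
      ((lam = 1 ∧ Nonempty (Γ ≃g gimel (quotGraph Γ P) (quotDelta Γ P))) ∨
        (2 ≤ lam ∧ XInvariantPartition X (quotRefine Γ P) ∧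
          NontrivialBlocks (quotRefine Γ P) ∧
          (∀ S ∈ quotRefine Γ P, ∃ B ∈ P, S ⊆ B) ∧ quotRefine Γ P ≠ P ∧
          Nonempty (quotGraph Γ (quotRefine Γ P) ≃g
            gimel (quotGraph Γ P) (quotDelta Γ P)))) := by

  classical
  obtain ⟨hpres, hvtrans, hatrans⟩ := hsym
  obtain ⟨⟨hPne, hPuniq⟩, hPinv⟩ := hP
  set G := quotGraph Γ P with hGdef
  -- ## basic facts
  have adj_smul : ∀ (x : X) {u w : V}, Γ.Adj u w → Γ.Adj (x • u) (x • w) :=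
    fun x {u w} h => hpres x u w h
  have adj_smul_iff : ∀ (x : X) (u w : V), Γ.Adj (x • u) (x • w) ↔ Γ.Adj u w := by
    intro x u w
    refine ⟨fun h => ?_, adj_smul x⟩
    have := adj_smul x⁻¹ h
    simpa using this
  have mem_nbhd : ∀ (B : Set V) (u : V), u ∈ nbhd Γ B ↔ ∃ w ∈ B, Γ.Adj u w := by
    intro B u
    simp only [nbhd, Set.mem_iUnion, SimpleGraph.mem_neighborSet]
    exact ⟨fun ⟨w, hw, h⟩ => ⟨w, hw, h.symm⟩, fun ⟨w, hw, h⟩ => ⟨w, hw, h.symm⟩⟩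
  have qadj_iff : ∀ B C : ↥P, G.Adj B C ↔
      (B ≠ C ∧ ∃ u ∈ (B : Set V), ∃ w ∈ (C : Set V), Γ.Adj u w) := by
    intro B C
    rw [hGdef, quotGraph, SimpleGraph.fromRel_adj]
    constructor
    · rintro ⟨hne, ⟨u, hu, w, hw, h⟩ | ⟨u, hu, w, hw, h⟩⟩
      · exact ⟨hne, u, hu, w, hw, h⟩
      · exact ⟨hne, w, hw, u, hu, h.symm⟩
    · rintro ⟨hne, h⟩
      exact ⟨hne, Or.inl h⟩
  have blkE : ∀ v : V, ∃ B : ↥P, v ∈ (B : Set V) := by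
    intro v
    obtain ⟨B, ⟨hBP, hvB⟩, -⟩ := hPuniq v
    exact ⟨⟨B, hBP⟩, hvB⟩
  choose blk mem_blk using blkE
  have blk_eq : ∀ {v : V} {B : Set V}, B ∈ P → v ∈ B → B = ↑(blk v) := by
    intro v B hB hv
    exact ((hPuniq v).unique ⟨hB, hv⟩ ⟨(blk v).2, mem_blk v⟩ : B = ↑(blk v))
  have blk_smul : ∀ (x : X) (v : V), (↑(blk (x • v)) : Set V) = x • (↑(blk v) : Set V) :=
    fun x v => (blk_eq (hPinv x _ (blk v).2) (Set.smul_mem_smul_set (mem_blk v))).symm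
  have nbhd_smul : ∀ (x : X) (B : Set V), nbhd Γ (x • B) = x • nbhd Γ B := by
    intro x B
    ext u
    rw [mem_nbhd, Set.mem_smul_set_iff_inv_smul_mem, mem_nbhd]
    constructor
    · rintro ⟨w, hw, h⟩
      rw [Set.mem_smul_set_iff_inv_smul_mem] at hw
      exact ⟨x⁻¹ • w, hw, adj_smul x⁻¹ h⟩
    · rintro ⟨w, hw, h⟩
      refine ⟨x • w, by rw [Set.mem_smul_set_iff_inv_smul_mem]; simpa, ?_⟩
      have := adj_smul x h
      simpa using this
  -- there is at least one quotient edge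
  have exists_qedge : ∃ C : ↥P, G.Adj B₀ C := by
    have h := hqreg B₀
    have hne : (G.neighborSet B₀).Nonempty :=
      Set.nonempty_of_ncard_ne_zero (by rw [hGdef] at h ⊢; omega)
    obtain ⟨C, hC⟩ := hne
    exact ⟨C, hC⟩
  -- no intra-block edges
  have no_intra : ∀ {u w : V}, Γ.Adj u w → blk u ≠ blk w := by
    intro u w huw heq
    obtain ⟨C, hC⟩ := exists_qedge
    obtain ⟨hne, u₀, hu₀, w₀, hw₀, h₀⟩ := (qadj_iff B₀ C).1 hC
    obtain ⟨x, hx⟩ := hatrans (u, w) (u₀, w₀) huw h₀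
    have h1 : x • u = u₀ := congrArg Prod.fst hx
    have h2 : x • w = w₀ := congrArg Prod.snd hx
    apply hne
    apply Subtype.ext
    have e1 : (B₀ : Set V) = ↑(blk u₀) := blk_eq B₀.2 hu₀
    have e2 : (C : Set V) = ↑(blk w₀) := blk_eq C.2 hw₀
    rw [e1, e2, ← h1, ← h2, blk_smul, blk_smul, heq]
  -- the two side blocks of a vertex
  have side2 : ∀ v : V, ∃ C D : Set V, C ≠ D ∧
      {E : Set V | E ∈ P ∧ v ∈ nbhd Γ E} = {C, D} := by
    intro v
    exact Set.ncard_eq_two.1 (hr2 v)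
  choose C₁ C₂ hCne hCpair using side2
  have hC₁ : ∀ v : V, C₁ v ∈ P ∧ v ∈ nbhd Γ (C₁ v) := by
    intro v
    have : C₁ v ∈ ({C₁ v, C₂ v} : Set (Set V)) := by simp
    rw [← hCpair v] at this
    exact this
  have hC₂ : ∀ v : V, C₂ v ∈ P ∧ v ∈ nbhd Γ (C₂ v) := by
    intro v
    have : C₂ v ∈ ({C₁ v, C₂ v} : Set (Set V)) := by simp
    rw [← hCpair v] at this
    exact this
  have side_mem : ∀ {v : V} {E : Set V}, E ∈ P → v ∈ nbhd Γ E → E = C₁ v ∨ E = C₂ v := by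
    intro v E hE hv
    have : E ∈ ({C₁ v, C₂ v} : Set (Set V)) := by rw [← hCpair v]; exact ⟨hE, hv⟩
    simpa using this
  have side_ne_blk : ∀ {v : V} {E : Set V}, E ∈ P → v ∈ nbhd Γ E → E ≠ ↑(blk v) := by
    intro v E hE hv heq
    obtain ⟨w, hwE, hadj⟩ := (mem_nbhd E v).1 hv
    have : (E : Set V) = ↑(blk w) := blk_eq hE hwE
    exact no_intra hadj (Subtype.ext (this.symm.trans heq)).symm
  have side_adj : ∀ {v : V} {E : Set V} (hE : E ∈ P), v ∈ nbhd Γ E →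
      G.Adj (blk v) ⟨E, hE⟩ := by
    intro v E hE hv
    obtain ⟨w, hwE, hadj⟩ := (mem_nbhd E v).1 hv
    refine (qadj_iff _ _).2 ⟨?_, v, mem_blk v, w, hwE, hadj⟩
    intro heq
    exact side_ne_blk hE hv (congrArg Subtype.val heq.symm)
  have side_determined : ∀ {v : V} {E F E' : Set V},
      E ∈ P → v ∈ nbhd Γ E → F ∈ P → v ∈ nbhd Γ F → E' ∈ P → v ∈ nbhd Γ E' →
      E ≠ F → E' ≠ F → E' = E := by
    intro v E F E' hE hvE hF hvF hE' hvE' hEF hE'F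
    rcases side_mem hE hvE with h1 | h1 <;> rcases side_mem hF hvF with h2 | h2 <;>
      rcases side_mem hE' hvE' with h3 | h3 <;> subst h1 <;> subst h3 <;>
      first | rfl | (exact absurd h2 (by tauto)) | (exact absurd rfl (by tauto)) |
        (exact absurd (h2.symm.trans rfl) (by tauto)) | tauto
  -- blk of a neighbour is a side block
  have nb_side : ∀ {u w : V}, Γ.Adj u w → u ∈ nbhd Γ (↑(blk w) : Set V) := by
    intro u w h
    exact (mem_nbhd _ _).2 ⟨w, mem_blk w, h⟩
  have other_ex : ∀ {u w : V}, Γ.Adj u w →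
      ∃ E, E ∈ P ∧ u ∈ nbhd Γ E ∧ E ≠ ↑(blk w) := by
    intro u w h
    rcases side_mem (blk w).2 (nb_side h) with h1 | h1
    · exact ⟨C₂ u, (hC₂ u).1, (hC₂ u).2, by rw [h1]; exact (hCne u).symm⟩
    · exact ⟨C₁ u, (hC₁ u).1, (hC₁ u).2, by rw [h1]; exact hCne u⟩
  -- block transitivity
  have blk_nonempty : ∀ B : ↥P, (B : Set V).Nonempty := by
    intro B
    exact Set.nonempty_of_ncard_ne_zero (by have := (hPnt ↑B B.2).1; omega)
  have blk_trans : ∀ B C : ↥P, ∃ x : X, (C : Set V) = x • (B : Set V) := by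
    intro B C
    obtain ⟨u, hu⟩ := blk_nonempty B
    obtain ⟨w, hw⟩ := blk_nonempty C
    obtain ⟨x, hx⟩ := hvtrans u w
    refine ⟨x, ?_⟩
    have h1 : (C : Set V) = ↑(blk w) := blk_eq C.2 hw
    have h2 : (B : Set V) = ↑(blk u) := blk_eq B.2 hu
    rw [h1, h2, ← hx, blk_smul]
  -- adjacency of images
  have qadj_smul : ∀ (x : X) (B C B' C' : ↥P), G.Adj B C →
      (B' : Set V) = x • ↑B → (C' : Set V) = x • ↑C → G.Adj B' C' := by
    intro x B C B' C' hadj hB' hC'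
    obtain ⟨hne, u, hu, w, hw, h⟩ := (qadj_iff _ _).1 hadj
    refine (qadj_iff _ _).2 ⟨?_, x • u, ?_, x • w, ?_, adj_smul x h⟩
    · intro heq
      apply hne
      apply Subtype.ext
      have : (B' : Set V) = ↑C' := congrArg Subtype.val heq
      rw [hB', hC'] at this
      exact smul_left_cancel x this
    · rw [hB']; exact Set.smul_mem_smul_set hu
    · rw [hC']; exact Set.smul_mem_smul_set hw
  -- the superposition hypothesis for arbitrary middle block
  have hsup' : ∀ D B C : ↥P, G.Adj D B → G.Adj B C → D ≠ C →
      (nbhd Γ ↑D ∩ ↑B ∩ nbhd Γ ↑C).Nonempty := by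
    intro D B C hDB hBC hDC
    obtain ⟨x, hx⟩ := blk_trans B₀ B
    set D₀ : ↥P := ⟨x⁻¹ • ↑D, hPinv x⁻¹ ↑D D.2⟩ with hD₀
    set C₀ : ↥P := ⟨x⁻¹ • ↑C, hPinv x⁻¹ ↑C C.2⟩ with hC₀
    have hB₀ : (B₀ : Set V) = x⁻¹ • (B : Set V) := by rw [hx]; simp
    have h1 : G.Adj D₀ B₀ := qadj_smul x⁻¹ D B D₀ B₀ hDB rfl hB₀
    have h2 : G.Adj B₀ C₀ := qadj_smul x⁻¹ B C B₀ C₀ hBC hB₀ rfl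
    have hne : D₀ ≠ C₀ := by
      intro heq
      apply hDC
      apply Subtype.ext
      have : x⁻¹ • (D : Set V) = x⁻¹ • (C : Set V) := congrArg Subtype.val heq
      exact smul_left_cancel x⁻¹ this
    obtain ⟨u, ⟨huD, huB⟩, huC⟩ := hsup D₀ C₀ h1 h2 hne
    refine ⟨x • u, ⟨?_, ?_⟩, ?_⟩
    · have : nbhd Γ (↑D₀ : Set V) = x⁻¹ • nbhd Γ ↑D := nbhd_smul x⁻¹ ↑D
      rw [this, Set.mem_smul_set_iff_inv_smul_mem] at huD
      simpa using huD
    · rw [hB₀, Set.mem_smul_set_iff_inv_smul_mem] at huB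
      simpa using huB
    · have : nbhd Γ (↑C₀ : Set V) = x⁻¹ • nbhd Γ ↑C := nbhd_smul x⁻¹ ↑C
      rw [this, Set.mem_smul_set_iff_inv_smul_mem] at huC
      simpa using huC
  -- 2-arc transitivity of the quotient
  have arc2trans : ∀ D B C D' B' C' : ↥P, G.Adj D B → G.Adj B C → D ≠ C →
      G.Adj D' B' → G.Adj B' C' → D' ≠ C' →
      ∃ x : X, (D' : Set V) = x • ↑D ∧ (B' : Set V) = x • ↑B ∧ (C' : Set V) = x • ↑C := by
    intro D B C D' B' C' hDB hBC hDC hD'B' hB'C' hD'C'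
    obtain ⟨u, ⟨huD, huB⟩, huC⟩ := hsup' D B C hDB hBC hDC
    obtain ⟨u', ⟨hu'D, hu'B⟩, hu'C⟩ := hsup' D' B' C' hD'B' hB'C' hD'C'
    obtain ⟨c, hcC, hc⟩ := (mem_nbhd _ _).1 huC
    obtain ⟨c', hc'C, hc'⟩ := (mem_nbhd _ _).1 hu'C
    obtain ⟨x, hx⟩ := hatrans (u, c) (u', c') hc hc'
    have hxu : x • u = u' := congrArg Prod.fst hx
    have hxc : x • c = c' := congrArg Prod.snd hx
    have hBB' : (B' : Set V) = x • ↑B := by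
      rw [blk_eq B.2 huB, blk_eq B'.2 hu'B, ← hxu, blk_smul]
    have hCC' : (C' : Set V) = x • ↑C := by
      rw [blk_eq C.2 hcC, blk_eq C'.2 hc'C, ← hxc, blk_smul]
    refine ⟨x, ?_, hBB', hCC'⟩
    -- D' = x • D via side_determined at u'
    have hxD : x • (D : Set V) ∈ P := hPinv x ↑D D.2
    have hu'xD : u' ∈ nbhd Γ (x • (D : Set V)) := by
      rw [nbhd_smul, ← hxu]
      exact Set.smul_mem_smul_set huD
    have hEF : x • (D : Set V) ≠ ↑C' := by
      intro heq
      apply hDC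
      apply Subtype.ext
      rw [hCC'] at heq
      exact smul_left_cancel x heq
    have hGF : (D' : Set V) ≠ ↑C' := fun heq => hD'C' (Subtype.ext heq)
    exact side_determined hxD hu'xD C'.2 hu'C D'.2 hu'D hEF hGF
  -- ## Delta properties
  have delta_arc3 : ∀ t ∈ quotDelta Γ P, IsArc3 G t := by
    rintro ⟨C, B, B', D⟩ ⟨u, w, huw, hu, hw, huC, hwD, hCB', hDB⟩
    have hBu : B = blk u := Subtype.ext (blk_eq B.2 hu)
    have hB'w : B' = blk w := Subtype.ext (blk_eq B'.2 hw)
    have hCB : G.Adj C B := by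
      have h := side_adj C.2 huC
      rw [← hBu] at h
      simpa using h.symm
    have hBB' : G.Adj B B' := by
      refine (qadj_iff _ _).2 ⟨?_, u, hu, w, hw, huw⟩
      rw [hBu, hB'w]
      exact no_intra huw
    have hB'D : G.Adj B' D := by
      have h := side_adj D.2 hwD
      rw [← hB'w] at h
      simpa using h
    exact ⟨hCB, hBB', hB'D, hCB', hDB.symm⟩
  have delta_rev : ∀ t ∈ quotDelta Γ P, rev3 t ∈ quotDelta Γ P := by
    rintro ⟨C, B, B', D⟩ ⟨u, w, huw, hu, hw, huC, hwD, hCB', hDB⟩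
    exact ⟨w, u, huw.symm, hw, hu, hwD, huC, hDB, hCB'⟩
  have delta_ne : ∃ t₀, t₀ ∈ quotDelta Γ P := by
    obtain ⟨C, hC⟩ := exists_qedge
    obtain ⟨hne, u, hu, w, hw, huw⟩ := (qadj_iff B₀ C).1 hC
    obtain ⟨E, hEP, hEnb, hEne⟩ := other_ex huw
    obtain ⟨F, hFP, hFnb, hFne⟩ := other_ex huw.symm
    refine ⟨(⟨E, hEP⟩, blk u, blk w, ⟨F, hFP⟩),
      u, w, huw, mem_blk u, mem_blk w, hEnb, hFnb, ?_, ?_⟩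
    · intro h; exact hEne (congrArg Subtype.val h)
    · intro h; exact hFne (congrArg Subtype.val h)
  have delta_trans : ∀ s ∈ quotDelta Γ P, ∀ t ∈ quotDelta Γ P, ∃ x : X,
      (t.1 : Set V) = x • ↑s.1 ∧ (t.2.1 : Set V) = x • ↑s.2.1 ∧
      (t.2.2.1 : Set V) = x • ↑s.2.2.1 ∧ (t.2.2.2 : Set V) = x • ↑s.2.2.2 := by
    rintro ⟨C, B, B', D⟩ ⟨u, w, huw, hu, hw, huC, hwD, hCB', hDB⟩
    rintro ⟨C2, B2, B2', D2⟩ ⟨u2, w2, huw2, hu2, hw2, huC2, hwD2, hCB'2, hDB2⟩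
    obtain ⟨x, hx⟩ := hatrans (u, w) (u2, w2) huw huw2
    have hxu : x • u = u2 := congrArg Prod.fst hx
    have hxw : x • w = w2 := congrArg Prod.snd hx
    have hBB : (B2 : Set V) = x • ↑B := by
      rw [blk_eq B.2 hu, blk_eq B2.2 hu2, ← hxu, blk_smul]
    have hBB' : (B2' : Set V) = x • ↑B' := by
      rw [blk_eq B'.2 hw, blk_eq B2'.2 hw2, ← hxw, blk_smul]
    refine ⟨x, ?_, hBB, hBB', ?_⟩
    · have h1 : x • (C : Set V) ∈ P := hPinv x ↑C C.2
      have h2 : u2 ∈ nbhd Γ (x • (C : Set V)) := by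
        rw [nbhd_smul, ← hxu]; exact Set.smul_mem_smul_set huC
      have h3 : u2 ∈ nbhd Γ (↑B2' : Set V) := (mem_nbhd _ _).2 ⟨w2, hw2, huw2⟩
      have hEF : x • (C : Set V) ≠ ↑B2' := by
        rw [hBB']
        intro heq
        exact hCB' (Subtype.ext (smul_left_cancel x heq))
      have hGF : (C2 : Set V) ≠ ↑B2' := fun h => hCB'2 (Subtype.ext h)
      exact side_determined h1 h2 B2'.2 h3 C2.2 huC2 hEF hGF
    · have h1 : x • (D : Set V) ∈ P := hPinv x ↑D D.2
      have h2 : w2 ∈ nbhd Γ (x • (D : Set V)) := by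
        rw [nbhd_smul, ← hxw]; exact Set.smul_mem_smul_set hwD
      have h3 : w2 ∈ nbhd Γ (↑B2 : Set V) := (mem_nbhd _ _).2 ⟨u2, hu2, huw2.symm⟩
      have hEF : x • (D : Set V) ≠ ↑B2 := by
        rw [hBB]
        intro heq
        exact hDB (Subtype.ext (smul_left_cancel x heq))
      have hGF : (D2 : Set V) ≠ ↑B2 := fun h => hDB2 (Subtype.ext h)
      exact side_determined h1 h2 B2.2 h3 D2.2 hwD2 hEF hGF
  have delta_smul_mem : ∀ s ∈ quotDelta Γ P, ∀ (x : X) (t : ↥P × ↥P × ↥P × ↥P),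
      (t.1 : Set V) = x • ↑s.1 → (t.2.1 : Set V) = x • ↑s.2.1 →
      (t.2.2.1 : Set V) = x • ↑s.2.2.1 → (t.2.2.2 : Set V) = x • ↑s.2.2.2 →
      t ∈ quotDelta Γ P := by
    rintro ⟨C, B, B', D⟩ ⟨u, w, huw, hu, hw, huC, hwD, hCB', hDB⟩ x ⟨C2, B2, B2', D2⟩ h1 h2 h3 h4
    refine ⟨x • u, x • w, adj_smul x huw, ?_, ?_, ?_, ?_, ?_, ?_⟩
    · show x • u ∈ (B2 : Set V)
      rw [h2]; exact Set.smul_mem_smul_set hu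
    · show x • w ∈ (B2' : Set V)
      rw [h3]; exact Set.smul_mem_smul_set hw
    · show x • u ∈ nbhd Γ (C2 : Set V)
      rw [h1, nbhd_smul]; exact Set.smul_mem_smul_set huC
    · show x • w ∈ nbhd Γ (D2 : Set V)
      rw [h4, nbhd_smul]; exact Set.smul_mem_smul_set hwD
    · intro heq
      apply hCB'
      apply Subtype.ext
      have h := congrArg Subtype.val heq
      rw [h1, h3] at h
      exact smul_left_cancel x h
    · intro heq
      apply hDB
      apply Subtype.ext
      have h := congrArg Subtype.val heq
      rw [h4, h2] at h
      exact smul_left_cancel x h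
  -- ## lambda
  have exists_2arc : ∃ D C : ↥P, G.Adj D B₀ ∧ G.Adj B₀ C ∧ D ≠ C := by
    have h : (G.neighborSet B₀).ncard = b := hqreg B₀
    have h1 : (G.neighborSet B₀).Nonempty := Set.nonempty_of_ncard_ne_zero (by omega)
    obtain ⟨D, hD⟩ := h1
    obtain ⟨C, hC, hne⟩ := Set.exists_ne_of_one_lt_ncard (by rw [h]; omega) D
    exact ⟨D, C, hD.symm, hC, hne.symm⟩
  obtain ⟨D₀, C₀, hD₀B₀, hB₀C₀, hD₀C₀⟩ := exists_2arc
  have lam_const : ∀ D B C : ↥P, G.Adj D B → G.Adj B C → D ≠ C →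
      (nbhd Γ ↑D ∩ ↑B ∩ nbhd Γ ↑C).ncard = (nbhd Γ ↑D₀ ∩ ↑B₀ ∩ nbhd Γ ↑C₀).ncard := by
    intro D B C hDB hBC hDC
    obtain ⟨x, h1, h2, h3⟩ := arc2trans D₀ B₀ C₀ D B C hD₀B₀ hB₀C₀ hD₀C₀ hDB hBC hDC
    have he : nbhd Γ ↑D ∩ ↑B ∩ nbhd Γ ↑C = x • (nbhd Γ ↑D₀ ∩ ↑B₀ ∩ nbhd Γ ↑C₀) := by
      rw [Set.smul_set_inter, Set.smul_set_inter, ← nbhd_smul, ← nbhd_smul, ← h1, ← h2, ← h3]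
    rw [he, Set.ncard_smul_set]
  set lam := (nbhd Γ ↑D₀ ∩ ↑B₀ ∩ nbhd Γ ↑C₀).ncard with hlamdef
  have lam_pos : 0 < lam := by
    rw [hlamdef]
    exact (Set.ncard_pos (Set.toFinite _)).2 (hsup' D₀ B₀ C₀ hD₀B₀ hB₀C₀ hD₀C₀)
  -- ## 2-path machinery
  have pmidE : ∃ pmid : P2 G → ↥P, ∀ p : Path2 G, pmid (P2.mk G p) = p.1.2.1 := by
    refine ⟨Quot.lift (fun p : Path2 G => p.1.2.1) ?_, fun p => rfl⟩
    rintro p q rfl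
    rfl
  obtain ⟨pmid, hpmid⟩ := pmidE
  have pendsE : ∃ pe : P2 G → Sym2 ↥P, ∀ p : Path2 G, pe (P2.mk G p) = s(p.1.1, p.1.2.2) := by
    refine ⟨Quot.lift (fun p : Path2 G => s(p.1.1, p.1.2.2)) ?_, fun p => rfl⟩
    rintro p q rfl
    exact Sym2.eq_swap
  obtain ⟨pends, hpends⟩ := pendsE
  have mk_rev : ∀ p : Path2 G, P2.mk G (p2rev G p) = P2.mk G p := by
    intro p
    symm
    apply Quot.sound
    rfl
  have cpathE : ∀ v : V, ∃ p : Path2 G,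
      p.1.1 = (⟨C₁ v, (hC₁ v).1⟩ : ↥P) ∧ p.1.2.1 = blk v ∧
      p.1.2.2 = (⟨C₂ v, (hC₂ v).1⟩ : ↥P) := by
    intro v
    have h1 : G.Adj (⟨C₁ v, (hC₁ v).1⟩ : ↥P) (blk v) := (side_adj (hC₁ v).1 (hC₁ v).2).symm
    have h2 : G.Adj (blk v) (⟨C₂ v, (hC₂ v).1⟩ : ↥P) := side_adj (hC₂ v).1 (hC₂ v).2
    have h3 : (⟨C₁ v, (hC₁ v).1⟩ : ↥P) ≠ ⟨C₂ v, (hC₂ v).1⟩ :=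
      fun h => hCne v (congrArg Subtype.val h)
    exact ⟨⟨(⟨C₁ v, (hC₁ v).1⟩, blk v, ⟨C₂ v, (hC₂ v).1⟩), h1, h2, h3⟩, rfl, rfl, rfl⟩
  choose cpath hcp1 hcp2 hcp3 using cpathE
  set φ : V → P2 G := fun v => P2.mk G (cpath v) with hφdef
  have phi_mid : ∀ v : V, pmid (φ v) = blk v := by
    intro v
    show pmid (P2.mk G (cpath v)) = blk v
    rw [hpmid, hcp2]
  have phi_ends : ∀ v : V, pends (φ v) =
      s((⟨C₁ v, (hC₁ v).1⟩ : ↥P), (⟨C₂ v, (hC₂ v).1⟩ : ↥P)) := by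
    intro v
    show pends (P2.mk G (cpath v)) = _
    rw [hpends, hcp1, hcp3]
  have phi_mk : ∀ (v : V) (p : Path2 G), p.1.2.1 = blk v →
      v ∈ nbhd Γ ↑(p.1.1) → v ∈ nbhd Γ ↑(p.1.2.2) → P2.mk G p = φ v := by
    rintro v ⟨⟨A, Bm, C⟩, hp1, hp2, hp3⟩ hmid h1 h2
    simp only at hmid h1 h2 hp1 hp2 hp3
    rcases side_mem A.2 h1 with ha | ha <;> rcases side_mem C.2 h2 with hc | hc
    · exact absurd (Subtype.ext (ha.trans hc.symm) : A = C) hp3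
    · -- equal to cpath v
      have eA : A = (⟨C₁ v, (hC₁ v).1⟩ : ↥P) := Subtype.ext ha
      have eC : C = (⟨C₂ v, (hC₂ v).1⟩ : ↥P) := Subtype.ext hc
      have : (⟨(A, Bm, C), hp1, hp2, hp3⟩ : Path2 G) = cpath v := by
        apply Subtype.ext
        show (A, Bm, C) = (cpath v).1
        rw [eA, eC, hmid, ← hcp1 v, ← hcp2 v, ← hcp3 v]
      rw [this]
    · -- equal to p2rev of cpath v
      have eA : A = (⟨C₂ v, (hC₂ v).1⟩ : ↥P) := Subtype.ext ha
      have eC : C = (⟨C₁ v, (hC₁ v).1⟩ : ↥P) := Subtype.ext hc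
      have : (⟨(A, Bm, C), hp1, hp2, hp3⟩ : Path2 G) = p2rev G (cpath v) := by
        apply Subtype.ext
        show (A, Bm, C) = ((cpath v).1.2.2, (cpath v).1.2.1, (cpath v).1.1)
        rw [eA, eC, hmid, ← hcp1 v, ← hcp2 v, ← hcp3 v]
      rw [this, mk_rev]
    · exact absurd (Subtype.ext (ha.trans hc.symm) : A = C) hp3
  have phi_mem : ∀ v w : V, φ v = φ w →
      w ∈ nbhd Γ (C₁ v) ∩ (↑(blk v) : Set V) ∩ nbhd Γ (C₂ v) := by
    intro v w h
    have hm : blk v = blk w := by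
      rw [← phi_mid v, ← phi_mid w, h]
    have he : s((⟨C₁ v, (hC₁ v).1⟩ : ↥P), (⟨C₂ v, (hC₂ v).1⟩ : ↥P)) =
        s((⟨C₁ w, (hC₁ w).1⟩ : ↥P), (⟨C₂ w, (hC₂ w).1⟩ : ↥P)) := by
      rw [← phi_ends v, ← phi_ends w, h]
    have hwb : w ∈ (↑(blk v) : Set V) := by rw [hm]; exact mem_blk w
    rcases Sym2.eq_iff.1 he with ⟨e1, e2⟩ | ⟨e1, e2⟩
    · have g1 : C₁ v = C₁ w := congrArg Subtype.val e1
      have g2 : C₂ v = C₂ w := congrArg Subtype.val e2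
      exact ⟨⟨by rw [g1]; exact (hC₁ w).2, hwb⟩, by rw [g2]; exact (hC₂ w).2⟩
    · have g1 : C₁ v = C₂ w := congrArg Subtype.val e1
      have g2 : C₂ v = C₁ w := congrArg Subtype.val e2
      exact ⟨⟨by rw [g1]; exact (hC₂ w).2, hwb⟩, by rw [g2]; exact (hC₁ w).2⟩
  have Sv_card : ∀ v : V,
      (nbhd Γ (C₁ v) ∩ (↑(blk v) : Set V) ∩ nbhd Γ (C₂ v)).ncard = lam := by
    intro v
    exact lam_const ⟨C₁ v, (hC₁ v).1⟩ (blk v) ⟨C₂ v, (hC₂ v).1⟩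
      ((side_adj (hC₁ v).1 (hC₁ v).2).symm) (side_adj (hC₂ v).1 (hC₂ v).2)
      (fun h => hCne v (congrArg Subtype.val h))
  have Sv_self : ∀ v : V, v ∈ nbhd Γ (C₁ v) ∩ (↑(blk v) : Set V) ∩ nbhd Γ (C₂ v) :=
    fun v => ⟨⟨(hC₁ v).2, mem_blk v⟩, (hC₂ v).2⟩
  have adj_phi : ∀ {v w : V}, Γ.Adj v w → (gimel G (quotDelta Γ P)).Adj (φ v) (φ w) := by
    intro v w hvw
    obtain ⟨E, hEP, hEnb, hEne⟩ := other_ex hvw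
    obtain ⟨F, hFP, hFnb, hFne⟩ := other_ex hvw.symm
    have hadjEB : G.Adj (⟨E, hEP⟩ : ↥P) (blk v) := (side_adj hEP hEnb).symm
    have hadjBB : G.Adj (blk v) (blk w) :=
      (qadj_iff _ _).2 ⟨no_intra hvw, v, mem_blk v, w, mem_blk w, hvw⟩
    have hadjBF : G.Adj (blk w) (⟨F, hFP⟩ : ↥P) := side_adj hFP hFnb
    have hne1 : (⟨E, hEP⟩ : ↥P) ≠ blk w := fun h => hEne (congrArg Subtype.val h)
    have hne2 : blk v ≠ (⟨F, hFP⟩ : ↥P) := fun h => hFne (congrArg Subtype.val h).symm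
    have hφv : φ v = P2.mk G (⟨((⟨E, hEP⟩ : ↥P), blk v, blk w), hadjEB, hadjBB, hne1⟩ : Path2 G) :=
      (phi_mk v _ rfl hEnb (nb_side hvw)).symm
    have hφw : φ w = P2.mk G (⟨(blk v, blk w, (⟨F, hFP⟩ : ↥P)), hadjBB, hadjBF, hne2⟩ : Path2 G) :=
      (phi_mk w _ rfl (nb_side hvw.symm) hFnb).symm
    have hΔ : ((⟨E, hEP⟩ : ↥P), blk v, blk w, (⟨F, hFP⟩ : ↥P)) ∈ quotDelta Γ P :=
      ⟨v, w, hvw, mem_blk v, mem_blk w, hEnb, hFnb, hne1, hne2.symm⟩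
    have hneφ : φ v ≠ φ w := by
      intro h
      have h1 := phi_mid v
      rw [h, phi_mid w] at h1
      exact no_intra hvw h1.symm
    rw [gimel, SimpleGraph.fromRel_adj]
    exact ⟨hneφ, Or.inl ⟨_, _, hφv, hφw, rfl, rfl, hΔ⟩⟩
  have pair_nbhd : ∀ (v a : V) (E F : ↥P),
      s(E, F) = s((⟨C₁ v, (hC₁ v).1⟩ : ↥P), (⟨C₂ v, (hC₂ v).1⟩ : ↥P)) →
      a ∈ nbhd Γ ↑E → a ∈ nbhd Γ ↑F → a ∈ nbhd Γ (C₁ v) ∧ a ∈ nbhd Γ (C₂ v) := by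
    intro v a E F h hE hF
    rcases Sym2.eq_iff.1 h with ⟨h1, h2⟩ | ⟨h1, h2⟩ <;> subst h1 <;> subst h2
    · exact ⟨hE, hF⟩
    · exact ⟨hF, hE⟩
  have gimel_elim1 : ∀ v w : V, (∃ p q : Path2 G, φ v = P2.mk G p ∧ φ w = P2.mk G q ∧
        p.1.2.1 = q.1.1 ∧ p.1.2.2 = q.1.2.1 ∧
        (p.1.1, p.1.2.1, p.1.2.2, q.1.2.2) ∈ quotDelta Γ P) →
      ∃ a c : V, Γ.Adj a c ∧
        a ∈ nbhd Γ (C₁ v) ∩ (↑(blk v) : Set V) ∩ nbhd Γ (C₂ v) ∧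
        c ∈ nbhd Γ (C₁ w) ∩ (↑(blk w) : Set V) ∩ nbhd Γ (C₂ w) := by
    rintro v w ⟨p, q, hv, hw, e1, e2, hΔ⟩
    obtain ⟨a, c, hac, haB, hcB', haC, hcD, hne1, hne2⟩ := hΔ
    have hmidv : p.1.2.1 = blk v := by
      have h := phi_mid v
      rw [hv, hpmid] at h
      exact h
    have hmidw : q.1.2.1 = blk w := by
      have h := phi_mid w
      rw [hw, hpmid] at h
      exact h
    have hendv : s(p.1.1, p.1.2.2) =
        s((⟨C₁ v, (hC₁ v).1⟩ : ↥P), (⟨C₂ v, (hC₂ v).1⟩ : ↥P)) := by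
      have h := phi_ends v
      rw [hv, hpends] at h
      exact h
    have hendw : s(q.1.1, q.1.2.2) =
        s((⟨C₁ w, (hC₁ w).1⟩ : ↥P), (⟨C₂ w, (hC₂ w).1⟩ : ↥P)) := by
      have h := phi_ends w
      rw [hw, hpends] at h
      exact h
    have haB' : a ∈ nbhd Γ ↑(p.1.2.2) := (mem_nbhd _ _).2 ⟨c, hcB', hac⟩
    have hcA : c ∈ nbhd Γ ↑(q.1.1) := by
      rw [← e1]
      exact (mem_nbhd _ _).2 ⟨a, haB, hac.symm⟩
    obtain ⟨ha1, ha2⟩ := pair_nbhd v a p.1.1 p.1.2.2 hendv haC haB'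
    obtain ⟨hc1, hc2⟩ := pair_nbhd w c q.1.1 q.1.2.2 hendw hcA hcD
    refine ⟨a, c, hac, ⟨⟨ha1, ?_⟩, ha2⟩, ⟨⟨hc1, ?_⟩, hc2⟩⟩
    · rw [← hmidv]; exact haB
    · rw [← hmidw, ← e2]; exact hcB'
  have gimel_elim : ∀ v w : V, (gimel G (quotDelta Γ P)).Adj (φ v) (φ w) →
      ∃ a c : V, Γ.Adj a c ∧
        a ∈ nbhd Γ (C₁ v) ∩ (↑(blk v) : Set V) ∩ nbhd Γ (C₂ v) ∧
        c ∈ nbhd Γ (C₁ w) ∩ (↑(blk w) : Set V) ∩ nbhd Γ (C₂ w) := by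
    intro v w h
    rw [gimel, SimpleGraph.fromRel_adj] at h
    obtain ⟨hne, h | h⟩ := h
    · exact gimel_elim1 v w h
    · obtain ⟨a, c, hac, h1, h2⟩ := gimel_elim1 w v h
      exact ⟨c, a, hac.symm, h2, h1⟩
  have phi_surj : ∀ z : P2 G, ∃ v : V, φ v = z := by
    intro z
    obtain ⟨p, rfl⟩ := Quot.exists_rep z
    obtain ⟨u, ⟨huD, huB⟩, huC⟩ := hsup' p.1.1 p.1.2.1 p.1.2.2 p.2.1 p.2.2.1 p.2.2.2
    exact ⟨u, (phi_mk u p (Subtype.ext (blk_eq p.1.2.1.2 huB)) huD huC).symm⟩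
  -- ## assembly
  obtain ⟨t₀, ht₀⟩ := delta_ne
  refine ⟨⟨fun x z w z' w' h h1 h2 => qadj_smul x z w z' w' h h1 h2,
      fun z w => blk_trans z w, ?_⟩,
      fun z₁ z₂ z₃ w₁ w₂ w₃ h1 h2 h3 h4 h5 h6 => by
        obtain ⟨x, e1, e2, e3⟩ := arc2trans z₁ z₂ z₃ w₁ w₂ w₃ h1 h2 h3 h4 h5 h6
        exact ⟨x, e1, e2, e3⟩,
      ⟨delta_arc3, ⟨t₀, ht₀, fun t => ⟨fun ht => delta_trans t₀ ht₀ t ht,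
        fun ⟨x, h1, h2, h3, h4⟩ => delta_smul_mem t₀ ht₀ x t h1 h2 h3 h4⟩⟩, delta_rev⟩,
      lam, fun D B C h1 h2 h3 => lam_const D B C h1 h2 h3, ?_⟩
  · -- arc transitivity of the quotient
    intro z₁ z₂ w₁ w₂ h1 h2
    obtain ⟨hne, u, hu, c, hc, huc⟩ := (qadj_iff _ _).1 h1
    obtain ⟨hne', u', hu', c', hc', huc'⟩ := (qadj_iff _ _).1 h2
    obtain ⟨x, hx⟩ := hatrans (u, c) (u', c') huc huc'
    have hxu : x • u = u' := congrArg Prod.fst hx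
    have hxc : x • c = c' := congrArg Prod.snd hx
    refine ⟨x, ?_, ?_⟩
    · show (w₁ : Set V) = x • ↑z₁
      rw [blk_eq z₁.2 hu, blk_eq w₁.2 hu', ← hxu, blk_smul]
    · show (w₂ : Set V) = x • ↑z₂
      rw [blk_eq z₂.2 hc, blk_eq w₂.2 hc', ← hxc, blk_smul]
  -- the dichotomy
  rcases Nat.lt_or_ge lam 2 with hl | hl
  · -- lam = 1
    have hlam1 : lam = 1 := by omega
    have hinj : Function.Injective φ := by
      intro v w h
      have hw := phi_mem v w h
      have hv := Sv_self v
      have hcard := Sv_card v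
      rw [hlam1] at hcard
      obtain ⟨z, hz⟩ := Set.ncard_eq_one.1 hcard
      rw [hz] at hw hv
      rw [Set.mem_singleton_iff.1 hv, Set.mem_singleton_iff.1 hw]
    refine Or.inl ⟨hlam1, ⟨⟨Equiv.ofBijective φ ⟨hinj, fun z => phi_surj z⟩, ?_⟩⟩⟩
    intro v w
    constructor
    · intro h
      obtain ⟨a, c, hac, ha, hc⟩ := gimel_elim v w h
      have hcard := Sv_card v
      rw [hlam1] at hcard
      obtain ⟨z, hz⟩ := Set.ncard_eq_one.1 hcard
      have hv := Sv_self v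
      rw [hz] at ha hv
      have hcard' := Sv_card w
      rw [hlam1] at hcard'
      obtain ⟨z', hz'⟩ := Set.ncard_eq_one.1 hcard'
      have hw := Sv_self w
      rw [hz'] at hc hw
      have e1 : a = v := (Set.mem_singleton_iff.1 ha).trans (Set.mem_singleton_iff.1 hv).symm
      have e2 : c = w := (Set.mem_singleton_iff.1 hc).trans (Set.mem_singleton_iff.1 hw).symm
      rw [← e1, ← e2]
      exact hac
    · exact fun h => adj_phi h
  · -- lam ≥ 2
    have Sv_memQ : ∀ v : V,
        nbhd Γ (C₁ v) ∩ (↑(blk v) : Set V) ∩ nbhd Γ (C₂ v) ∈ quotRefine Γ P :=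
      fun v => ⟨⟨C₁ v, (hC₁ v).1⟩, blk v, ⟨C₂ v, (hC₂ v).1⟩,
        (side_adj (hC₁ v).1 (hC₁ v).2).symm, side_adj (hC₂ v).1 (hC₂ v).2,
        fun h => hCne v (congrArg Subtype.val h), rfl⟩
    have Q_eq : ∀ S ∈ quotRefine Γ P, ∀ v ∈ S,
        S = nbhd Γ (C₁ v) ∩ (↑(blk v) : Set V) ∩ nbhd Γ (C₂ v) := by
      rintro S ⟨D, B, C, hDB, hBC, hDC, rfl⟩ v hv
      obtain ⟨⟨hvD, hvB⟩, hvC⟩ := hv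
      have hB : (B : Set V) = ↑(blk v) := blk_eq B.2 hvB
      have hDne : (D : Set V) ≠ ↑C := fun h => hDC (Subtype.ext h)
      rcases side_mem D.2 hvD with h1 | h1 <;> rcases side_mem C.2 hvC with h2 | h2
      · exact absurd (h1.trans h2.symm) hDne
      · rw [h1, h2, hB]
      · rw [h1, h2, hB]
        ext z
        constructor
        · rintro ⟨⟨a1, a2⟩, a3⟩; exact ⟨⟨a3, a2⟩, a1⟩
        · rintro ⟨⟨a1, a2⟩, a3⟩; exact ⟨⟨a3, a2⟩, a1⟩
      · exact absurd (h1.trans h2.symm) hDne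
    have hQpart1 : ∅ ∉ quotRefine Γ P := by
      rintro ⟨D, B, C, hDB, hBC, hDC, h⟩
      obtain ⟨z, hz⟩ := hsup' D B C hDB hBC hDC
      rw [← h] at hz
      exact hz
    have hQpart2 : ∀ a : V, ∃! S, S ∈ quotRefine Γ P ∧ a ∈ S := by
      intro a
      refine ⟨nbhd Γ (C₁ a) ∩ (↑(blk a) : Set V) ∩ nbhd Γ (C₂ a),
        ⟨Sv_memQ a, Sv_self a⟩, ?_⟩
      rintro S ⟨hSQ, haS⟩
      exact Q_eq S hSQ a haS
    have hQinv : ∀ (x : X), ∀ S ∈ quotRefine Γ P, x • S ∈ quotRefine Γ P := by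
      rintro x S ⟨D, B, C, hDB, hBC, hDC, rfl⟩
      refine ⟨⟨x • ↑D, hPinv x ↑D D.2⟩, ⟨x • ↑B, hPinv x ↑B B.2⟩, ⟨x • ↑C, hPinv x ↑C C.2⟩,
        qadj_smul x D B _ _ hDB rfl rfl, qadj_smul x B C _ _ hBC rfl rfl, ?_, ?_⟩
      · intro h
        exact hDC (Subtype.ext (smul_left_cancel x (congrArg Subtype.val h)))
      · show x • (nbhd Γ ↑D ∩ ↑B ∩ nbhd Γ ↑C) = nbhd Γ (x • ↑D) ∩ (x • ↑B) ∩ nbhd Γ (x • ↑C)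
        rw [nbhd_smul, nbhd_smul, Set.smul_set_inter, Set.smul_set_inter]
    have hQnt : NontrivialBlocks (quotRefine Γ P) := by
      rintro S ⟨D, B, C, hDB, hBC, hDC, rfl⟩
      have hcard : (nbhd Γ ↑D ∩ ↑B ∩ nbhd Γ ↑C).ncard = lam := lam_const D B C hDB hBC hDC
      have hsub : nbhd Γ ↑D ∩ ↑B ∩ nbhd Γ ↑C ⊆ ↑B := fun z hz => hz.1.2
      have hle := Set.ncard_le_ncard hsub (Set.toFinite _)
      have hB := (hPnt ↑B B.2).2
      omega
    have hQneP : quotRefine Γ P ≠ P := by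
      intro hQP
      obtain ⟨v, hv⟩ := blk_nonempty B₀
      have hSQ := Sv_memQ v
      rw [hQP] at hSQ
      have hSblk : nbhd Γ (C₁ v) ∩ (↑(blk v) : Set V) ∩ nbhd Γ (C₂ v) = ↑(blk v) :=
        blk_eq hSQ (Sv_self v)
      apply hnmc (blk v) ⟨C₂ v, (hC₂ v).1⟩ (side_adj (hC₂ v).1 (hC₂ v).2)
      show nbhd Γ (C₂ v) ∩ (↑(blk v) : Set V) = ↑(blk v)
      ext z
      constructor
      · rintro ⟨-, h⟩
        exact h
      · intro h
        have hz : z ∈ nbhd Γ (C₁ v) ∩ (↑(blk v) : Set V) ∩ nbhd Γ (C₂ v) := by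
          rw [hSblk]
          exact h
        exact ⟨hz.2, h⟩
    have hQvex : ∀ S : ↥(quotRefine Γ P), ∃ v : V, v ∈ (S : Set V) := by
      rintro ⟨S, D, B, C, hDB, hBC, hDC, rfl⟩
      exact hsup' D B C hDB hBC hDC
    choose vS hvS using hQvex
    have phi_eq_on : ∀ (v w : V),
        w ∈ nbhd Γ (C₁ v) ∩ (↑(blk v) : Set V) ∩ nbhd Γ (C₂ v) → φ w = φ v := by
      intro v w hw
      obtain ⟨⟨h1, h2⟩, h3⟩ := hw
      have hm : (cpath v).1.2.1 = blk w := by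
        rw [hcp2]
        exact Subtype.ext (blk_eq (blk v).2 h2)
      have hmk := phi_mk w (cpath v) hm (by rw [hcp1]; exact h1) (by rw [hcp3]; exact h3)
      exact hmk.symm
    have hSv : ∀ S : ↥(quotRefine Γ P), (S : Set V) =
        nbhd Γ (C₁ (vS S)) ∩ (↑(blk (vS S)) : Set V) ∩ nbhd Γ (C₂ (vS S)) :=
      fun S => Q_eq ↑S S.2 (vS S) (hvS S)
    have ψinj : Function.Injective (fun S : ↥(quotRefine Γ P) => φ (vS S)) := by
      intro S S' h
      simp only at h
      have h2 := phi_mem (vS S) (vS S') h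
      have h3 := Q_eq _ (Sv_memQ (vS S)) (vS S') h2
      apply Subtype.ext
      rw [hSv S, hSv S', ← h3]
    have ψsurj : Function.Surjective (fun S : ↥(quotRefine Γ P) => φ (vS S)) := by
      intro z
      obtain ⟨v, hv⟩ := phi_surj z
      refine ⟨⟨_, Sv_memQ v⟩, ?_⟩
      show φ (vS ⟨_, Sv_memQ v⟩) = z
      rw [phi_eq_on v _ (hvS ⟨_, Sv_memQ v⟩), hv]
    have ψadj1 : ∀ S S' : ↥(quotRefine Γ P), (quotGraph Γ (quotRefine Γ P)).Adj S S' →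
        (gimel G (quotDelta Γ P)).Adj (φ (vS S)) (φ (vS S')) := by
      intro S S' h
      rw [quotGraph, SimpleGraph.fromRel_adj] at h
      obtain ⟨hne, ⟨u, hu, w, hw, huw⟩ | ⟨u, hu, w, hw, huw⟩⟩ := h
      · have e1 : φ u = φ (vS S) := phi_eq_on (vS S) u (by rw [← hSv S]; exact hu)
        have e2 : φ w = φ (vS S') := phi_eq_on (vS S') w (by rw [← hSv S']; exact hw)
        rw [← e1, ← e2]
        exact adj_phi huw
      · have e1 : φ u = φ (vS S') := phi_eq_on (vS S') u (by rw [← hSv S']; exact hu)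
        have e2 : φ w = φ (vS S) := phi_eq_on (vS S) w (by rw [← hSv S]; exact hw)
        rw [← e1, ← e2]
        exact (adj_phi huw).symm
    have ψadj2 : ∀ S S' : ↥(quotRefine Γ P),
        (gimel G (quotDelta Γ P)).Adj (φ (vS S)) (φ (vS S')) →
        (quotGraph Γ (quotRefine Γ P)).Adj S S' := by
      intro S S' h
      obtain ⟨a, c, hac, ha, hc⟩ := gimel_elim (vS S) (vS S') h
      rw [quotGraph, SimpleGraph.fromRel_adj]
      refine ⟨?_, Or.inl ⟨a, ?_, c, ?_, hac⟩⟩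
      · intro he
        rw [he] at h
        exact h.ne rfl
      · rw [hSv S]
        exact ha
      · rw [hSv S']
        exact hc
    refine Or.inr ⟨hl, ⟨⟨hQpart1, hQpart2⟩, hQinv⟩, hQnt, ?_, hQneP,
      ⟨⟨Equiv.ofBijective _ ⟨ψinj, ψsurj⟩, ?_⟩⟩⟩
    · rintro S ⟨D, B, C, hDB, hBC, hDC, rfl⟩
      exact ⟨↑B, B.2, fun z hz => hz.1.2⟩
    · intro S S'
      exact ⟨ψadj2 S S', ψadj1 S S'⟩
end

section
/- Let Σ be an X-symmetric graph of valency v ≥ 2, and let Θ be a self-paired X-symmetric orbit on the k-double stars of Σ, where 1 ≤ k ≤ v−1. Set Γ = Π(Σ,Θ), S = St(Θ), S_τ = {s(τ,S) ∈ S : S ⊆ Σ(τ), |S| = k} for τ ∈ V(Σ), and B = {S_τ : τ ∈ V(Σ)}. Then Γ is X-symmetric, B is a nontrivial X-invariant partition of V(Γ) = S, the quotient Γ_B has valency ≥ 2, Γ is not a multicover of Γ_B, the map τ ↦ S_τ is a graph isomorphism from Σ to Γ_B, and for B = S_τ the design D(B) is isomorphic to the dual of the design 𝔻(τ) with point set Σ(τ)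 and block set S_τ in which σ is incident with s(τ,S) iff σ ∈ S. -/
open Pointwise

/-- A `k`-star of `G`, given as a pair `(τ, S)` with `S ⊆ G(τ)` and `|S| = k`. -/
def IsStar {V : Type*} (G : SimpleGraph V) (k : ℕ) (s : V × Set V) : Prop :=
  s.2 ⊆ G.neighborSet s.1 ∧ s.2.ncard = k

/-- The star `s` is symmetric: its stabilizer in `X` is transitive on `s.2`. -/
def StarSymmetric (X : Type*) {V : Type*} [Group X] [MulAction X V] (s : V × Set V) : Prop :=
  ∀ a ∈ s.2, ∀ b ∈ s.2, ∃ x : X, x • s = s ∧ x • a = b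

/-- A `k`-double star of `G`: a pair of `k`-stars `(s(τ,L), s(σ,R))` with `σ ∈ L`, `τ ∈ R`. -/
def IsDStar {V : Type*} (G : SimpleGraph V) (k : ℕ)
    (d : (V × Set V) × (V × Set V)) : Prop :=
  IsStar G k d.1 ∧ IsStar G k d.2 ∧ d.2.1 ∈ d.1.2 ∧ d.1.1 ∈ d.2.2

/-- `St(Θ)`: the set of stars occurring as a coordinate of a member of `Θ`. -/
def StSet {V : Type*} (Θ : Set ((V × Set V) × (V × Set V))) : Set (V × Set V) :=
  {s | ∃ d ∈ Θ, s = d.1 ∨ s = d.2}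

/-- A set of stars is `X`-symmetric: it is nonempty, `X`-transitive, and some (hence
every) member is a symmetric star. -/
def StarsXSymm (X : Type*) {V : Type*} [Group X] [MulAction X V]
    (S : Set (V × Set V)) : Prop :=
  S.Nonempty ∧ (∀ s ∈ S, ∀ t ∈ S, ∃ x : X, x • s = t) ∧ ∃ s ∈ S, StarSymmetric X s

/-- `Θ` is a self-paired `X`-symmetric orbit on the `k`-double stars of `G`. -/
def SelfPairedSymmOrbitDStar (X : Type*) {V : Type*} [Group X] [MulAction X V]
    (G : SimpleGraph V) (k : ℕ) (Θ : Set ((V × Set V) × (V × Set V))) : Prop :=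
  (∀ d ∈ Θ, IsDStar G k d) ∧ (∃ d₀ ∈ Θ, Θ = MulAction.orbit X d₀) ∧
  (∀ d ∈ Θ, (d.2, d.1) ∈ Θ) ∧ StarsXSymm X (StSet Θ)

/-- The double star graph `Π(G,Θ)` on the star set of `Θ`. -/
def PiGraph {V : Type*} (Θ : Set ((V × Set V) × (V × Set V))) :
    SimpleGraph ↥(StSet Θ) :=
  SimpleGraph.fromRel (fun l r => ((l : V × Set V), (r : V × Set V)) ∈ Θ)

/-- The block `S_τ` of all stars in `St(Θ)` with centre `τ`. -/
def SBlock {V : Type*} (Θ : Set ((V × Set V) × (V × Set V))) (τ : V) :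
    Set ↥(StSet Θ) :=
  {s | (s : V × Set V).1 = τ}

/-- `x ∈ X` maps the star `s` to the star `t`. -/
def StarMaps (X : Type*) {V : Type*} [Group X] [MulAction X V]
    (Θ : Set ((V × Set V) × (V × Set V))) (x : X) (s t : ↥(StSet Θ)) : Prop :=
  (t : V × Set V) = x • (s : V × Set V)

section DSHelpers

variable {V X : Type*} [Group X] [MulAction X V]

lemma DS.adj_smul_iff {G : SimpleGraph V} (hp : AdjPres X G) (x : X) {u w : V} :
    G.Adj (x • u) (x • w) ↔ G.Adj u w := by
  constructor
  · intro h
    have h2 := hp x⁻¹ _ _ h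
    simpa using h2
  · exact hp x u w

lemma DS.neighborSet_smul {G : SimpleGraph V} (hp : AdjPres X G) (x : X) (τ : V) :
    G.neighborSet (x • τ) = x • G.neighborSet τ := by
  ext w
  constructor
  · intro h
    refine ⟨x⁻¹ • w, ?_, by simp⟩
    have h2 : G.Adj (x⁻¹ • (x • τ)) (x⁻¹ • w) := hp x⁻¹ _ _ h
    simpa using h2
  · rintro ⟨a, ha, rfl⟩
    exact hp x _ _ ha

lemma DS.theta_smul {G : SimpleGraph V} {k : ℕ} {Θ : Set ((V × Set V) × (V × Set V))}
    (hΘ : SelfPairedSymmOrbitDStar X G k Θ) (x : X) {d} (hd : d ∈ Θ) : x • d ∈ Θ := by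
  obtain ⟨d₀, hd₀, hEq⟩ := hΘ.2.1
  rw [hEq] at hd ⊢
  obtain ⟨y, rfl⟩ := hd
  rw [← mul_smul]
  exact MulAction.mem_orbit d₀ (x * y)

lemma DS.theta_trans {G : SimpleGraph V} {k : ℕ} {Θ : Set ((V × Set V) × (V × Set V))}
    (hΘ : SelfPairedSymmOrbitDStar X G k Θ) {d d'} (hd : d ∈ Θ) (hd' : d' ∈ Θ) :
    ∃ x : X, x • d = d' := by
  obtain ⟨d₀, hd₀, hEq⟩ := hΘ.2.1
  rw [hEq] at hd hd'
  obtain ⟨y, rfl⟩ := hd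
  obtain ⟨z, rfl⟩ := hd'
  exact ⟨z * y⁻¹, by rw [← mul_smul]; group⟩

lemma DS.st_smul {G : SimpleGraph V} {k : ℕ} {Θ : Set ((V × Set V) × (V × Set V))}
    (hΘ : SelfPairedSymmOrbitDStar X G k Θ) (x : X) {s} (hs : s ∈ StSet Θ) :
    x • s ∈ StSet Θ := by
  obtain ⟨d, hd, hsd⟩ := hs
  refine ⟨x • d, DS.theta_smul hΘ x hd, ?_⟩
  rcases hsd with h | h
  · exact Or.inl (by rw [h]; rfl)
  · exact Or.inr (by rw [h]; rfl)

lemma DS.st_isStar {G : SimpleGraph V} {k : ℕ} {Θ : Set ((V × Set V) × (V × Set V))}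
    (hΘ : SelfPairedSymmOrbitDStar X G k Θ) {s} (hs : s ∈ StSet Θ) : IsStar G k s := by
  obtain ⟨d, hd, hsd⟩ := hs
  have h := hΘ.1 d hd
  rcases hsd with h1 | h1
  · rw [h1]; exact h.1
  · rw [h1]; exact h.2.1

lemma DS.arc_stab {G : SimpleGraph V} (hsym : XSymm X G) {τ σ σ' : V}
    (h1 : G.Adj τ σ) (h2 : G.Adj τ σ') : ∃ x : X, x • τ = τ ∧ x • σ = σ' := by
  obtain ⟨x, hx⟩ := hsym.2.2 (τ, σ) (τ, σ') h1 h2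
  exact ⟨x, congrArg Prod.fst hx, congrArg Prod.snd hx⟩

lemma DS.block_nonempty {G : SimpleGraph V} {k : ℕ} {Θ : Set ((V × Set V) × (V × Set V))}
    (hΘ : SelfPairedSymmOrbitDStar X G k Θ) (hsym : XSymm X G) (τ : V) :
    ∃ s : ↥(StSet Θ), s ∈ SBlock Θ τ := by
  obtain ⟨s₀, hs₀⟩ := hΘ.2.2.2.1
  obtain ⟨x, hx⟩ := hsym.2.1 s₀.1 τ
  exact ⟨⟨x • s₀, DS.st_smul hΘ x hs₀⟩, hx⟩

lemma DS.center_mem {G : SimpleGraph V} {k : ℕ} {Θ : Set ((V × Set V) × (V × Set V))}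
    (hΘ : SelfPairedSymmOrbitDStar X G k Θ) {s t : V × Set V}
    (h : (s, t) ∈ Θ ∨ (t, s) ∈ Θ) : t.1 ∈ s.2 := by
  rcases h with h | h
  · exact (hΘ.1 _ h).2.2.1
  · exact (hΘ.1 _ h).2.2.2

lemma DS.exists_avoid {G : SimpleGraph V} {v k : ℕ} {Θ : Set ((V × Set V) × (V × Set V))}
    (hΘ : SelfPairedSymmOrbitDStar X G k Θ) (hsym : XSymm X G) (hreg : Regular G v)
    (hkv : k < v) {τ σ : V} (hadj : G.Adj τ σ) :
    ∃ s : ↥(StSet Θ), s ∈ SBlock Θ τ ∧ σ ∉ (s : V × Set V).2 := by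
  by_contra hcon
  push_neg at hcon
  have hall : ∀ σ' ∈ G.neighborSet τ, ∀ s : ↥(StSet Θ), s ∈ SBlock Θ τ →
      σ' ∈ (s : V × Set V).2 := by
    intro σ' hσ' s hs
    obtain ⟨x, hxτ, hxσ⟩ := DS.arc_stab hsym hadj hσ'
    have hxinv : x⁻¹ • τ = τ := inv_smul_eq_iff.mpr hxτ.symm
    have hmem : (⟨x⁻¹ • (s : V × Set V), DS.st_smul hΘ x⁻¹ s.2⟩ : ↥(StSet Θ)) ∈
        SBlock Θ τ := by
      show (x⁻¹ • (s : V × Set V)).1 = τ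
      show x⁻¹ • (s : V × Set V).1 = τ
      rw [hs]; exact hxinv
    have h2 := hcon _ hmem
    have h3 : σ ∈ x⁻¹ • (s : V × Set V).2 := h2
    obtain ⟨b, hb, hbe⟩ := Set.mem_smul_set.mp h3
    have : x • σ = b := by rw [← hbe]; simp
    rw [← hxσ, this]; exact hb
  obtain ⟨s, hs⟩ := DS.block_nonempty hΘ hsym τ
  have hstar := DS.st_isStar hΘ s.2
  have hsub : G.neighborSet τ ⊆ (s : V × Set V).2 := fun σ' hσ' => hall σ' hσ' s hs
  have hsub2 : (s : V × Set V).2 ⊆ G.neighborSet τ := by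
    have := hstar.1; rwa [hs] at this
  have heq : (s : V × Set V).2 = G.neighborSet τ := Set.Subset.antisymm hsub2 hsub
  have : k = v := by rw [← hstar.2, heq, hreg τ]
  omega

lemma DS.starSymmetric_smul {s : V × Set V} (h : StarSymmetric X s) (x : X) :
    StarSymmetric X (x • s) := by
  intro a ha b hb
  obtain ⟨a₀, ha₀, rfl⟩ := Set.mem_smul_set.mp ha
  obtain ⟨b₀, hb₀, rfl⟩ := Set.mem_smul_set.mp hb
  obtain ⟨y, hy1, hy2⟩ := h a₀ ha₀ b₀ hb₀
  refine ⟨x * y * x⁻¹, ?_, ?_⟩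
  · rw [mul_smul, mul_smul, inv_smul_smul, hy1]
  · rw [mul_smul, mul_smul, inv_smul_smul, hy2]

lemma DS.st_starSymmetric {G : SimpleGraph V} {k : ℕ} {Θ : Set ((V × Set V) × (V × Set V))}
    (hΘ : SelfPairedSymmOrbitDStar X G k Θ) {s} (hs : s ∈ StSet Θ) :
    StarSymmetric X s := by
  obtain ⟨s₀, hs₀, hsym₀⟩ := hΘ.2.2.2.2.2
  obtain ⟨x, hx⟩ := hΘ.2.2.2.2.1 s₀ hs₀ s hs
  rw [← hx]
  exact DS.starSymmetric_smul hsym₀ x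

lemma DS.partner {G : SimpleGraph V} {k : ℕ} {Θ : Set ((V × Set V) × (V × Set V))}
    (hΘ : SelfPairedSymmOrbitDStar X G k Θ) {s : V × Set V} (hs : s ∈ StSet Θ)
    {σ : V} (hσ : σ ∈ s.2) : ∃ t ∈ StSet Θ, t.1 = σ ∧ (s, t) ∈ Θ := by
  obtain ⟨d₀, hd₀, hEq⟩ := hΘ.2.1
  have hd₀1 : d₀.1 ∈ StSet Θ := ⟨d₀, hd₀, Or.inl rfl⟩
  obtain ⟨x, hx⟩ := hΘ.2.2.2.2.1 d₀.1 hd₀1 s hs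
  have hxd : x • d₀ ∈ Θ := DS.theta_smul hΘ x hd₀
  have hfst : (x • d₀).1 = s := hx
  have hσ₀ : (x • d₀).2.1 ∈ s.2 := by
    have := (hΘ.1 _ hxd).2.2.1
    rwa [hfst] at this
  obtain ⟨y, hy1, hy2⟩ := DS.st_starSymmetric hΘ hs _ hσ₀ σ hσ
  have hyd : y • (x • d₀) ∈ Θ := DS.theta_smul hΘ y hxd
  refine ⟨(y • (x • d₀)).2, ⟨y • (x • d₀), hyd, Or.inr rfl⟩, ?_, ?_⟩
  · show y • (x • d₀).2.1 = σ
    exact hy2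
  · have hfst2 : (y • (x • d₀)).1 = s := by
      show y • (x • d₀).1 = s
      rw [hfst]; exact hy1
    have : (y • (x • d₀)) = (s, (y • (x • d₀)).2) := by
      rw [← hfst2]
    rwa [this] at hyd

end DSHelpers
/-- Properties of the double star graph `Π(G,Θ)` for a self-paired
`X`-symmetric orbit `Θ` on the `k`-double stars of an `X`-symmetric graph `G` of valency
`v ≥ 2`, `1 ≤ k ≤ v − 1`:  `Π` is `X`-symmetric, the blocks `S_τ` form a nontrivial
`X`-invariant partition of its vertex set, the quotient has valency at least 2, `Π` is not
a multicover of the quotient, `τ ↦ S_τ` is a graph isomorphism from `G` onto the quotient,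
and `D(S_τ)` is isomorphic to the dual of the design `𝔻(τ)`. -/
theorem doubleStarGraph_properties {V X : Type*} [Fintype V] [Group X] [MulAction X V]
    (G : SimpleGraph V) (v : ℕ) (hv : 2 ≤ v) (hreg : Regular G v) (hsym : XSymm X G)
    (k : ℕ) (hk1 : 1 ≤ k) (hk2 : k ≤ v - 1)
    (Θ : Set ((V × Set V) × (V × Set V))) (hΘ : SelfPairedSymmOrbitDStar X G k Θ) :
    -- `Π(G,Θ)` is `X`-symmetric
    RelXSymm X (StarMaps X Θ) (PiGraph Θ) ∧
    -- the blocks `S_τ` form a nontrivial `X`-invariant partition of the vertex set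
    Setoid.IsPartition {S : Set ↥(StSet Θ) | ∃ τ : V, S = SBlock Θ τ} ∧
    (∀ (x : X) (τ : V),
      {t : ↥(StSet Θ) | ∃ s ∈ SBlock Θ τ, StarMaps X Θ x s t} = SBlock Θ (x • τ)) ∧
    (∀ τ : V, 1 < (SBlock Θ τ).ncard ∧
      (SBlock Θ τ).ncard < (Set.univ : Set ↥(StSet Θ)).ncard) ∧
    -- the quotient has valency at least `2`
    (∀ τ : V, 2 ≤ ({σ : V | QAdj (PiGraph Θ) (SBlock Θ τ) (SBlock Θ σ)}).ncard) ∧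
    -- `Π(G,Θ)` is not a multicover of the quotient
    (∀ τ σ : V, QAdj (PiGraph Θ) (SBlock Θ τ) (SBlock Θ σ) →
      nbhd (PiGraph Θ) (SBlock Θ σ) ∩ SBlock Θ τ ≠ SBlock Θ τ) ∧
    -- `τ ↦ S_τ` is a graph isomorphism from `G` onto the quotient
    Function.Injective (fun τ : V => SBlock Θ τ) ∧
    (∀ τ σ : V, G.Adj τ σ ↔ QAdj (PiGraph Θ) (SBlock Θ τ) (SBlock Θ σ)) ∧
    -- `D(S_τ) ≅ 𝔻*(τ)`
    (∀ τ : V, ∃ f : {σ : V | QAdj (PiGraph Θ) (SBlock Θ τ) (SBlock Θ σ)} ≃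
        {σ : V | G.Adj τ σ},
      ∀ s : ↥(StSet Θ), s ∈ SBlock Θ τ →
        ∀ C : {σ : V | QAdj (PiGraph Θ) (SBlock Θ τ) (SBlock Θ σ)},
          ((∃ t ∈ SBlock Θ (C : V), (PiGraph Θ).Adj s t) ↔
            (f C : V) ∈ (s : V × Set V).2)) := by
  classical
  have hkv : k < v := by omega
  have hAdjChar : ∀ (s t : ↥(StSet Θ)), (PiGraph Θ).Adj s t ↔
      s ≠ t ∧ (((s : V × Set V), (t : V × Set V)) ∈ Θ ∨
        ((t : V × Set V), (s : V × Set V)) ∈ Θ) :=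
    fun s t => SimpleGraph.fromRel_adj _ s t
  have hinj : Function.Injective (fun τ : V => SBlock Θ τ) := by
    intro τ σ h
    simp only at h
    obtain ⟨s, hs⟩ := DS.block_nonempty hΘ hsym τ
    have hs' : s ∈ SBlock Θ σ := h ▸ hs
    have h1 : (s : V × Set V).1 = τ := hs
    have h2 : (s : V × Set V).1 = σ := hs'
    rw [← h1, h2]
  have h8 : ∀ τ σ : V, G.Adj τ σ ↔ QAdj (PiGraph Θ) (SBlock Θ τ) (SBlock Θ σ) := by
    intro τ σ
    constructor
    · intro hadj
      obtain ⟨d₀, hd₀, -⟩ := hΘ.2.1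
      have harc : G.Adj d₀.1.1 d₀.2.1 := (hΘ.1 _ hd₀).1.1 (hΘ.1 _ hd₀).2.2.1
      obtain ⟨x, hx⟩ := hsym.2.2 (d₀.1.1, d₀.2.1) (τ, σ) harc hadj
      have hx1 : x • d₀.1.1 = τ := congrArg Prod.fst hx
      have hx2 : x • d₀.2.1 = σ := congrArg Prod.snd hx
      have hxd : x • d₀ ∈ Θ := DS.theta_smul hΘ x hd₀
      have hm1 : (x • d₀).1 ∈ StSet Θ := ⟨_, hxd, Or.inl rfl⟩
      have hm2 : (x • d₀).2 ∈ StSet Θ := ⟨_, hxd, Or.inr rfl⟩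
      refine ⟨fun h => hadj.ne (hinj h), ⟨(x • d₀).1, hm1⟩, hx1, ⟨(x • d₀).2, hm2⟩, hx2, ?_⟩
      refine (hAdjChar _ _).mpr ⟨?_, Or.inl ?_⟩
      · intro h
        apply hadj.ne
        have h2 : ((x • d₀).1).1 = ((x • d₀).2).1 :=
          congrArg Prod.fst (congrArg Subtype.val h)
        rw [← hx1, ← hx2]
        exact h2
      · show ((x • d₀).1, (x • d₀).2) ∈ Θ
        rw [Prod.mk.eta]
        exact hxd
    · rintro ⟨hne, u, hu, w, hw, huw⟩
      obtain ⟨-, hrel⟩ := (hAdjChar u w).mp huw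
      rcases hrel with h | h
      · have hm : (w : V × Set V).1 ∈ (u : V × Set V).2 := DS.center_mem hΘ (Or.inl h)
        have hsub := (DS.st_isStar hΘ u.2).1
        have := hsub hm
        rw [hu, hw] at this
        exact this
      · have hm : (u : V × Set V).1 ∈ (w : V × Set V).2 := DS.center_mem hΘ (Or.inl h)
        have hsub := (DS.st_isStar hΘ w.2).1
        have := hsub hm
        rw [hu, hw] at this
        exact this.symm
  refine ⟨?_, ?_, ?_, ?_, ?_, ?_, hinj, h8, ?_⟩
  · -- RelXSymm
    refine ⟨?_, ?_, ?_⟩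
    · intro x z w z' w' hzw hz hw
      rw [hAdjChar] at hzw ⊢
      obtain ⟨hne, hrel⟩ := hzw
      refine ⟨?_, ?_⟩
      · intro h
        apply hne
        apply Subtype.ext
        have h2 : (z' : V × Set V) = (w' : V × Set V) := congrArg Subtype.val h
        rw [hz, hw] at h2
        exact smul_left_cancel x h2
      · rcases hrel with h | h
        · exact Or.inl (by rw [hz, hw]; exact DS.theta_smul hΘ x h)
        · exact Or.inr (by rw [hz, hw]; exact DS.theta_smul hΘ x h)
    · intro z w
      obtain ⟨x, hx⟩ := hΘ.2.2.2.2.1 (z : V × Set V) z.2 (w : V × Set V) w.2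
      exact ⟨x, hx.symm⟩
    · intro z₁ z₂ w₁ w₂ hz hw
      have hzθ : ((z₁ : V × Set V), (z₂ : V × Set V)) ∈ Θ := by
        rcases ((hAdjChar _ _).mp hz).2 with h | h
        · exact h
        · exact hΘ.2.2.1 _ h
      have hwθ : ((w₁ : V × Set V), (w₂ : V × Set V)) ∈ Θ := by
        rcases ((hAdjChar _ _).mp hw).2 with h | h
        · exact h
        · exact hΘ.2.2.1 _ h
      obtain ⟨x, hx⟩ := DS.theta_trans hΘ hzθ hwθ
      exact ⟨x, (congrArg Prod.fst hx).symm, (congrArg Prod.snd hx).symm⟩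
  · -- partition
    constructor
    · rintro ⟨τ, hτ⟩
      obtain ⟨s, hs⟩ := DS.block_nonempty hΘ hsym τ
      rw [← hτ] at hs
      exact hs
    · intro a
      refine ⟨SBlock Θ (a : V × Set V).1, ⟨⟨_, rfl⟩, rfl⟩, ?_⟩
      rintro b ⟨⟨τ, rfl⟩, hab⟩
      have h1 : (a : V × Set V).1 = τ := hab
      rw [h1]
  · -- block map
    intro x τ
    ext t
    constructor
    · rintro ⟨s, hs, ht⟩
      show (t : V × Set V).1 = x • τ
      rw [ht]
      show x • (s : V × Set V).1 = x • τ
      rw [hs]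
    · intro ht
      refine ⟨⟨x⁻¹ • (t : V × Set V), DS.st_smul hΘ x⁻¹ t.2⟩, ?_, ?_⟩
      · show x⁻¹ • (t : V × Set V).1 = τ
        have h1 : (t : V × Set V).1 = x • τ := ht
        rw [h1]
        simp
      · show (t : V × Set V) = x • (x⁻¹ • (t : V × Set V))
        simp
  · -- nontrivial blocks
    intro τ
    have hfin1 : (SBlock Θ τ).Finite := Set.toFinite _
    obtain ⟨s, hs⟩ := DS.block_nonempty hΘ hsym τ
    have hstar := DS.st_isStar hΘ s.2
    have hne2 : (s : V × Set V).2.Nonempty :=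
      Set.nonempty_of_ncard_ne_zero (by rw [hstar.2]; omega)
    obtain ⟨σ, hσ⟩ := hne2
    have hadj : G.Adj τ σ := by
      have h1 := hstar.1 hσ
      rw [hs] at h1
      exact h1
    obtain ⟨s', hs', hσ'⟩ := DS.exists_avoid hΘ hsym hreg hkv hadj
    constructor
    · rw [Set.one_lt_ncard_iff hfin1]
      exact ⟨s, s', hs, hs', fun h => hσ' (h ▸ hσ)⟩
    · obtain ⟨t, htb⟩ := DS.block_nonempty hΘ hsym σ
      refine Set.ncard_lt_ncard ⟨Set.subset_univ _, fun hsub => ?_⟩ (Set.toFinite _)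
      have hmem := hsub (Set.mem_univ t)
      have h1 : (t : V × Set V).1 = τ := hmem
      have h2 : (t : V × Set V).1 = σ := htb
      exact hadj.ne (h1.symm.trans h2)
  · -- valency ≥ 2
    intro τ
    have hset : {σ : V | QAdj (PiGraph Θ) (SBlock Θ τ) (SBlock Θ σ)} = G.neighborSet τ := by
      ext σ
      exact (h8 τ σ).symm
    rw [hset, hreg τ]
    exact hv
  · -- not multicover
    intro τ σ hq heq
    have hadj : G.Adj τ σ := (h8 τ σ).mpr hq
    obtain ⟨s, hs, hσs⟩ := DS.exists_avoid hΘ hsym hreg hkv hadj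
    rw [← heq] at hs
    obtain ⟨hnb, -⟩ := hs
    simp only [nbhd, Set.mem_iUnion] at hnb
    obtain ⟨u, hu, hadj_us⟩ := hnb
    have hd := (hAdjChar u s).mp hadj_us
    apply hσs
    have hm := DS.center_mem hΘ hd.2.symm
    rwa [hu] at hm
  · -- designs
    intro τ
    have hset : {σ : V | QAdj (PiGraph Θ) (SBlock Θ τ) (SBlock Θ σ)} = {σ : V | G.Adj τ σ} := by
      ext σ
      exact (h8 τ σ).symm
    refine ⟨Equiv.setCongr hset, ?_⟩
    intro s hs C
    have hfC : ((Equiv.setCongr hset) C : V) = (C : V) := rfl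
    rw [hfC]
    have hadj : G.Adj τ (C : V) := (h8 τ (C : V)).mpr C.2
    constructor
    · rintro ⟨t, ht, hst⟩
      have hd := (hAdjChar s t).mp hst
      have hm := DS.center_mem hΘ hd.2
      rwa [ht] at hm
    · intro hmem
      obtain ⟨t0, ht0, hc, hθ⟩ := DS.partner hΘ s.2 hmem
      refine ⟨⟨t0, ht0⟩, hc, ?_⟩
      rw [hAdjChar]
      refine ⟨?_, Or.inl hθ⟩
      intro h
      apply hadj.ne
      have h1 : (s : V × Set V).1 = τ := hs
      have h2 : (s : V × Set V).1 = t0.1 :=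
        congrArg (fun z : ↥(StSet Θ) => (z : V × Set V).1) h
      exact h1.symm.trans (h2.trans hc)
end

section
/- Let Σ be an X-symmetric graph of valency v ≥ 2 and τ ∈ V(Σ). If there exists an X_τ-flag-transitive 1-(v,k,r) design D(τ) with point set Σ(τ), where 1 ≤ k ≤ v−1, such that r/m(D(τ)) is odd, then there exists a self-paired X-symmetric orbit Θ on the k-double stars of Σ. -/
open Pointwise

private lemma isStar_smul_aux {V X : Type*} [Group X] [MulAction X V] {G : SimpleGraph V}
    (hadj : AdjPres X G) {k : ℕ} {s : V × Set V} (hs : IsStar G k s) (x : X) :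
    IsStar G k (x • s) := by
  obtain ⟨h1, h2⟩ := hs
  constructor
  · rintro q hq
    rw [show (x • s).2 = x • s.2 from rfl, Set.mem_smul_set] at hq
    obtain ⟨p, hp, rfl⟩ := hq
    exact hadj x _ _ (h1 hp)
  · exact (Set.ncard_smul_set x s.2).trans h2

private lemma isDStar_smul_aux {V X : Type*} [Group X] [MulAction X V] {G : SimpleGraph V}
    (hadj : AdjPres X G) {k : ℕ} {d : (V × Set V) × (V × Set V)} (hd : IsDStar G k d) (x : X) :
    IsDStar G k (x • d) := by
  obtain ⟨h1, h2, h3, h4⟩ := hd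
  exact ⟨isStar_smul_aux hadj h1 x, isStar_smul_aux hadj h2 x,
    Set.smul_mem_smul_set h3, Set.smul_mem_smul_set h4⟩

private lemma exists_odd_pow_fixedpt {α : Type*} [Fintype α] [DecidableEq α]
    (hodd : Odd (Fintype.card α)) (e : Equiv.Perm α) :
    ∃ m : ℕ, Odd m ∧ ∃ a : α, (e ^ m) a = a := by
  have hn : orderOf e ≠ 0 := (orderOf_pos e).ne'
  set s := (orderOf e).factorization 2 with hs
  set m := orderOf e / 2 ^ s with hm
  have hmdvd : m ∣ orderOf e := Nat.ordCompl_dvd _ 2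
  refine ⟨m, ?_, ?_⟩
  · exact Nat.odd_iff.2 (Nat.two_dvd_ne_zero.mp (Nat.not_dvd_ordCompl Nat.prime_two hn))
  · haveI : Fact (Nat.Prime 2) := ⟨Nat.prime_two⟩
    apply Equiv.Perm.exists_fixed_point_of_prime (p := 2) (n := s)
      (Nat.two_dvd_ne_zero.mpr (Nat.odd_iff.mp hodd))
    rw [← pow_mul]
    have h2 : m * 2 ^ s = orderOf e := by
      rw [mul_comm]; exact Nat.ordProj_mul_ordCompl_eq_self _ 2
    rw [h2, pow_orderOf_eq_one]

/-- Let `G` be an `X`-symmetric graph of valency `v ≥ 2` and `τ` a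
vertex.  If there is an `X_τ`-flag-transitive `1-(v,k,r)` design on `G(τ)` (blocks
indexed by `ι`, with incidence `Inc`), with `1 ≤ k ≤ v − 1`, whose multiplicity `mm`
satisfies `r = mm * r'` with `r'` odd, then there exists a self-paired `X`-symmetric
orbit on the `k`-double stars of `G`. -/
theorem exists_selfPaired_dstar_orbit {V X : Type*} [Fintype V] [Group X] [MulAction X V]
    (G : SimpleGraph V) (v : ℕ) (hv : 2 ≤ v) (hreg : Regular G v) (hsym : XSymm X G)
    (τ : V) (k r : ℕ) (hk1 : 1 ≤ k) (hk2 : k ≤ v - 1)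
    (ι : Type*) [Fintype ι] [Nonempty ι] (Inc : ι → V → Prop)
    [MulAction (MulAction.stabilizer X τ) ι]
    (hpts : ∀ (b : ι) (p : V), Inc b p → G.Adj τ p)
    (hblocksize : ∀ b : ι, ({p : V | Inc b p}).ncard = k)
    (hptdeg : ∀ p : V, G.Adj τ p → ({b : ι | Inc b p}).ncard = r)
    (hcompat : ∀ (g : MulAction.stabilizer X τ) (b : ι) (p : V),
      Inc b p → Inc (g • b) ((g : X) • p))
    (hflag : ∀ (b b' : ι) (p p' : V), Inc b p → Inc b' p' →
      ∃ g : MulAction.stabilizer X τ, g • b = b' ∧ (g : X) • p = p')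
    (mm r' : ℕ)
    (hmult : ∀ b : ι, ({b' : ι | {p : V | Inc b' p} = {p : V | Inc b p}}).ncard = mm)
    (hr : r = mm * r') (hodd : Odd r') :
    ∃ Θ : Set ((V × Set V) × (V × Set V)), SelfPairedSymmOrbitDStar X G k Θ := by
  classical
  obtain ⟨hadj, hvt, hat⟩ := hsym
  obtain ⟨b₀⟩ := ‹Nonempty ι›
  set tr : ι → Set V := fun b => {p : V | Inc b p} with htr
  -- choose a neighbour σ of τ lying on the trace of b₀
  have hk0 : (tr b₀).ncard ≠ 0 := by rw [htr, hblocksize]; omega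
  obtain ⟨σ, hσ0⟩ : (tr b₀).Nonempty := Set.nonempty_of_ncard_ne_zero hk0
  have hadjτσ : G.Adj τ σ := hpts b₀ σ hσ0
  -- an element swapping τ and σ
  obtain ⟨g₀, hg₀⟩ := hat (τ, σ) (σ, τ) hadjτσ hadjτσ.symm
  have hg₀τ : g₀ • τ = σ := congrArg Prod.fst hg₀
  have hg₀σ : g₀ • σ = τ := congrArg Prod.snd hg₀
  set z : X := g₀ ^ 2 with hz
  have hzτ : z • τ = τ := by rw [hz, pow_two, mul_smul, hg₀τ, hg₀σ]
  have hzσ : z • σ = σ := by rw [hz, pow_two, mul_smul, hg₀σ, hg₀τ]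
  set zs : MulAction.stabilizer X τ := ⟨z, hzτ⟩ with hzs
  -- the stabilizer of τ maps traces to traces
  have htr_smul : ∀ (g : MulAction.stabilizer X τ) (b : ι), (g : X) • tr b = tr (g • b) := by
    intro g b
    ext q
    simp only [htr, Set.mem_smul_set, Set.mem_setOf_eq]
    constructor
    · rintro ⟨p, hp, rfl⟩
      exact hcompat g b p hp
    · intro hq
      refine ⟨(g : X)⁻¹ • q, ?_, smul_inv_smul _ _⟩
      have h2 := hcompat g⁻¹ (g • b) q hq
      simpa [inv_smul_smul] using h2
  -- the set T of traces through σ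
  set T : Set (Set V) := {t | ∃ b, Inc b σ ∧ t = tr b} with hT
  have hTfin : T.Finite := by
    apply (Set.finite_range tr).subset
    rintro t ⟨b, -, rfl⟩; exact ⟨b, rfl⟩
  have hστ_smul : ∀ (g : MulAction.stabilizer X τ), (g : X) • σ = σ →
      ∀ t ∈ T, (g : X) • t ∈ T := by
    rintro g hgσ t ⟨b, hbσ, rfl⟩
    refine ⟨g • b, ?_, htr_smul g b⟩
    have h3 := hcompat g b σ hbσ
    rwa [hgσ] at h3
  have hzT : ∀ t ∈ T, z • t ∈ T := hστ_smul zs hzσ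
  have hzT' : ∀ t ∈ T, z⁻¹ • t ∈ T := by
    refine hστ_smul zs⁻¹ ?_
    show (zs : X)⁻¹ • σ = σ
    rw [inv_smul_eq_iff]; exact hzσ.symm
  -- |T| = r'
  have hmm_pos : 0 < mm := by
    rw [← hmult b₀]
    exact (Set.ncard_pos (Set.toFinite _)).mpr ⟨b₀, rfl⟩
  have hTcard : T.ncard = r' := by
    set B : Finset ι := Finset.univ.filter (fun b => Inc b σ) with hB
    have hBcard : B.card = r := by
      rw [← hptdeg σ hadjτσ, Set.ncard_eq_toFinset_card']
      congr 1
      ext b; simp [hB]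
    set TF : Finset (Set V) := B.image tr with hTF
    have hTeq : T = ↑TF := by
      ext t
      simp only [hT, hTF, Set.mem_setOf_eq, Finset.coe_image, Set.mem_image,
        Finset.mem_coe, hB, Finset.mem_filter, Finset.mem_univ, true_and]
      constructor
      · rintro ⟨b, hb, rfl⟩; exact ⟨b, hb, rfl⟩
      · rintro ⟨b, hb, rfl⟩; exact ⟨b, hb, rfl⟩
    have hsum : B.card = ∑ t ∈ TF, (B.filter (fun b => tr b = t)).card :=
      Finset.card_eq_sum_card_fiberwise (fun b hb => Finset.mem_image_of_mem _ hb)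
    have hfib : ∀ t ∈ TF, (B.filter (fun b => tr b = t)).card = mm := by
      intro t ht
      obtain ⟨b₂, hb₂, rfl⟩ := Finset.mem_image.mp ht
      have hb₂σ : Inc b₂ σ := by
        have := (Finset.mem_filter.mp hb₂).2
        exact this
      have h2 : B.filter (fun b => tr b = tr b₂) =
          Finset.univ.filter (fun b' => tr b' = tr b₂) := by
        ext b'
        simp only [hB, Finset.mem_filter, Finset.mem_univ, true_and]
        constructor
        · rintro ⟨-, h⟩; exact h
        · intro h
          refine ⟨?_, h⟩
          show σ ∈ tr b'
          rw [h]; exact hb₂σ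
      rw [h2, ← hmult b₂, Set.ncard_eq_toFinset_card']
      congr 1
      ext b'; simp [htr]
    have hr2 : r = TF.card * mm := by
      rw [← hBcard, hsum, Finset.sum_congr rfl hfib, Finset.sum_const, smul_eq_mul]
    have : T.ncard = TF.card := by rw [hTeq, Set.ncard_coe_finset]
    rw [this]
    have := hr2.symm.trans hr
    exact Nat.eq_of_mul_eq_mul_left hmm_pos (by rw [mul_comm TF.card mm] at this; exact this)
  -- a permutation of T induced by z
  haveI : Fintype ↥T := hTfin.fintype
  have hcardT : Fintype.card ↥T = r' := by
    rw [← hTcard, ← Nat.card_coe_set_eq, Nat.card_eq_fintype_card]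
  set e : Equiv.Perm ↥T :=
    { toFun := fun t => ⟨z • (t : Set V), hzT _ t.2⟩
      invFun := fun t => ⟨z⁻¹ • (t : Set V), hzT' _ t.2⟩
      left_inv := fun t => Subtype.ext (inv_smul_smul z (t : Set V))
      right_inv := fun t => Subtype.ext (smul_inv_smul z (t : Set V)) } with he
  have hepow : ∀ (n : ℕ) (t : ↥T), ((e ^ n) t : Set V) = z ^ n • (t : Set V) := by
    intro n
    induction n with
    | zero => intro t; simp
    | succ n ih =>
      intro t
      rw [pow_succ, pow_succ, Equiv.Perm.mul_apply, mul_smul]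
      have h5 : ((e t : Set V)) = z • (t : Set V) := rfl
      rw [ih (e t), h5]
  obtain ⟨m, hmodd, a, ham⟩ := exists_odd_pow_fixedpt (by rw [hcardT]; exact hodd) e
  obtain ⟨b₁, hb₁σ, hL₁⟩ := a.2
  have hfixL : z ^ m • (a : Set V) = (a : Set V) := by
    have h6 := congrArg Subtype.val ham
    rwa [hepow m a] at h6
  set L₁ : Set V := (a : Set V) with hL₁def
  -- the element y swapping τ and σ with y² • L₁ = L₁
  obtain ⟨j, hj⟩ := hmodd
  set y : X := g₀ ^ m with hy
  have hypow : y = z ^ j * g₀ := by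
    rw [hy, hj, pow_add, pow_mul, pow_one, hz]
  have hzpow_fix : ∀ (w : V), z • w = w → ∀ i : ℕ, z ^ i • w = w := by
    intro w hw i
    induction i with
    | zero => simp
    | succ i ih => rw [pow_succ, mul_smul, hw, ih]
  have hyτ : y • τ = σ := by rw [hypow, mul_smul, hg₀τ, hzpow_fix σ hzσ j]
  have hyσ : y • σ = τ := by rw [hypow, mul_smul, hg₀σ, hzpow_fix τ hzτ j]
  have hyy : y * y = z ^ m := by
    rw [hy, ← pow_add, hz, ← pow_mul]
    congr 1
    omega
  have hyyL : y • y • L₁ = L₁ := by rw [← mul_smul, hyy]; exact hfixL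
  -- the basic double star
  have hL₁nb : L₁ ⊆ G.neighborSet τ := by
    rw [hL₁]
    intro p hp
    exact hpts b₁ p hp
  have hL₁k : L₁.ncard = k := by
    rw [hL₁]
    exact hblocksize b₁
  have hσL₁ : σ ∈ L₁ := by rw [hL₁]; exact hb₁σ
  set R : Set V := y • L₁ with hR
  set s₀ : V × Set V := (τ, L₁) with hs₀
  set s₁ : V × Set V := (σ, R) with hs₁def
  have hs₁ : s₁ = y • s₀ := by
    rw [hs₁def, hs₀]
    show (σ, R) = (y • τ, y • L₁)
    rw [hyτ, hR]
  have hstar₀ : IsStar G k s₀ := ⟨hL₁nb, hL₁k⟩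
  have hstar₁ : IsStar G k s₁ := by rw [hs₁]; exact isStar_smul_aux hadj hstar₀ y
  set d₀ : (V × Set V) × (V × Set V) := (s₀, s₁) with hd₀
  have hτR : τ ∈ R := by
    rw [hR, ← hyσ]
    exact Set.smul_mem_smul_set hσL₁
  have hdstar₀ : IsDStar G k d₀ := ⟨hstar₀, hstar₁, hσL₁, hτR⟩
  have hys₁ : y • s₁ = s₀ := by
    rw [hs₁def, hs₀]
    show (y • σ, y • R) = (τ, L₁)
    rw [hyσ, hR, hyyL]
  refine ⟨MulAction.orbit X d₀, ?_, ⟨d₀, MulAction.mem_orbit_self d₀, rfl⟩, ?_, ?_⟩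
  · rintro d ⟨x, rfl⟩
    exact isDStar_smul_aux hadj hdstar₀ x
  · rintro d ⟨x, rfl⟩
    have h7 : ((x • d₀).2, (x • d₀).1) = (x * y) • d₀ := by
      rw [mul_smul]
      show (x • d₀.2, x • d₀.1) = x • (y • d₀)
      have h8 : y • d₀ = (d₀.2, d₀.1) := by
        rw [hd₀]
        show (y • s₀, y • s₁) = ((s₀, s₁).2, (s₀, s₁).1)
        rw [hys₁, ← hs₁]
      rw [h8]
      rfl
    rw [h7]
    exact MulAction.mem_orbit d₀ (x * y)
  · have hmem_st : ∀ s ∈ StSet (MulAction.orbit X d₀), ∃ w : X, s = w • s₀ := by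
      rintro s ⟨d, ⟨x, rfl⟩, hcase⟩
      rcases hcase with h | h
      · exact ⟨x, h⟩
      · refine ⟨x * y, ?_⟩
        rw [h, mul_smul]
        show x • d₀.2 = x • (y • s₀)
        rw [← hs₁]
    have hs₀mem : s₀ ∈ StSet (MulAction.orbit X d₀) :=
      ⟨d₀, MulAction.mem_orbit_self d₀, Or.inl rfl⟩
    refine ⟨⟨s₀, hs₀mem⟩, ?_, ⟨s₀, hs₀mem, ?_⟩⟩
    · intro s hs t ht
      obtain ⟨w₁, rfl⟩ := hmem_st s hs
      obtain ⟨w₂, rfl⟩ := hmem_st t ht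
      exact ⟨w₂ * w₁⁻¹, by rw [mul_smul, inv_smul_smul]⟩
    · intro p hp q hq
      have hp' : Inc b₁ p := by
        have : p ∈ L₁ := hp
        rwa [hL₁] at this
      have hq' : Inc b₁ q := by
        have : q ∈ L₁ := hq
        rwa [hL₁] at this
      obtain ⟨g, hgb, hgpq⟩ := hflag b₁ b₁ p q hp' hq'
      refine ⟨(g : X), ?_, hgpq⟩
      show ((g : X) • s₀.1, (g : X) • s₀.2) = s₀
      rw [hs₀]
      show ((g : X) • τ, (g : X) • L₁) = (τ, L₁)
      have h9 : (g : X) • τ = τ := g.2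
      have h10 : (g : X) • L₁ = L₁ := by
        rw [hL₁, htr_smul g b₁, hgb]
      rw [h9, h10]
end

section
/- Let Γ be a finite X-symmetric graph with a nontrivial X-invariant partition B of V(Γ) such that val(Γ_B) ≥ 2 and Γ is not a multicover of Γ_B, and let B ∈ B. If m*(Γ,B) = 1 and m(D(B)) = 1, then the permutation group induced by the setwise stabilizer X_B on B is isomorphic to the permutation group induced by X_B on the neighbourhood Γ_B(B) of B in Γ_B. -/
open Pointwise

/-- A `k`-star of the quotient graph of `Γ` modulo `P`, given as a pair `(B, 𝒮)` of a
block and a set of blocks adjacent to it. -/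
def QIsStar {V : Type*} (Γ : SimpleGraph V) (P : Set (Set V)) (k : ℕ)
    (s : Set V × Set (Set V)) : Prop :=
  s.1 ∈ P ∧ (∀ C ∈ s.2, C ∈ P ∧ QAdj Γ s.1 C) ∧ s.2.ncard = k

/-- A `k`-double star of the quotient graph of `Γ` modulo `P`. -/
def QIsDStar {V : Type*} (Γ : SimpleGraph V) (P : Set (Set V)) (k : ℕ)
    (d : (Set V × Set (Set V)) × (Set V × Set (Set V))) : Prop :=
  QIsStar Γ P k d.1 ∧ QIsStar Γ P k d.2 ∧ d.2.1 ∈ d.1.2 ∧ d.1.1 ∈ d.2.2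

/-- The star `s(B, Γ_B(u))` of the quotient graph. -/
def qStarOf {V : Type*} (Γ : SimpleGraph V) (P : Set (Set V)) (B : Set V) (u : V) :
    Set V × Set (Set V) :=
  (B, {C | C ∈ P ∧ u ∈ nbhd Γ C})

/-- The set `S = {s(B, Γ_B(u)) : u ∈ B ∈ P}` of stars of the quotient graph. -/
def qStarSet {V : Type*} (Γ : SimpleGraph V) (P : Set (Set V)) :
    Set (Set V × Set (Set V)) :=
  {s | ∃ B ∈ P, ∃ u ∈ B, s = qStarOf Γ P B u}

/-- The set `Θ` of double stars `(s(B,Γ_B(u)), s(C,Γ_B(w)))` with `(u,w)` an arc of `Γ`. -/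
def qTheta {V : Type*} (Γ : SimpleGraph V) (P : Set (Set V)) :
    Set ((Set V × Set (Set V)) × (Set V × Set (Set V))) :=
  {d | ∃ B ∈ P, ∃ C ∈ P, ∃ u ∈ B, ∃ w ∈ C, Γ.Adj u w ∧
    d = (qStarOf Γ P B u, qStarOf Γ P C w)}

/-- The block `B_u = B ∩ ⋂_{C ∈ Γ_B(u)} Γ(C)` of the refined partition. -/
def underBlock {V : Type*} (Γ : SimpleGraph V) (P : Set (Set V)) (B : Set V) (u : V) :
    Set V :=
  B ∩ ⋂ C ∈ {C : Set V | C ∈ P ∧ u ∈ nbhd Γ C}, nbhd Γ C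

/-- The refined partition `B̲ = {B_u : u ∈ B ∈ P}`. -/
def underPartition {V : Type*} (Γ : SimpleGraph V) (P : Set (Set V)) : Set (Set V) :=
  {S | ∃ B ∈ P, ∃ u ∈ B, S = underBlock Γ P B u}

/-- The permutation group induced on a set `U` of vertices by the setwise stabilizer of
`U` in `X`. -/
def inducedOnSet (X : Type*) {V : Type*} [Group X] [MulAction X V] (U : Set V) :
    Subgroup (Equiv.Perm ↥U) where
  carrier := {e | ∃ x : X, x • U = U ∧ ∀ u : ↥U, (e u : V) = x • (u : V)}
  one_mem' := ⟨1, one_smul _ _, fun u => by simp⟩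
  mul_mem' := by
    rintro e f ⟨x, hxU, hx⟩ ⟨y, hyU, hy⟩
    refine ⟨x * y, by rw [mul_smul, hyU, hxU], fun u => ?_⟩
    rw [Equiv.Perm.mul_apply, hx, hy, mul_smul]
  inv_mem' := by
    rintro e ⟨x, hxU, hx⟩
    refine ⟨x⁻¹, inv_smul_eq_iff.mpr hxU.symm, fun u => ?_⟩
    have h := hx (e⁻¹ u)
    rw [show e (e⁻¹ u) = u from e.apply_symm_apply u] at h
    rw [eq_inv_smul_iff]
    exact h.symm

/-- The permutation group induced on a collection `N` of sets of vertices (e.g. the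
neighbouring blocks of a block `B`) by the setwise stabilizer of `B` in `X`. -/
def inducedOnBlocks (X : Type*) {V : Type*} [Group X] [MulAction X V] (B : Set V)
    (N : Set (Set V)) : Subgroup (Equiv.Perm ↥N) where
  carrier := {e | ∃ x : X, x • B = B ∧ ∀ C : ↥N, (e C : Set V) = x • (C : Set V)}
  one_mem' := ⟨1, one_smul _ _, fun C => by simp⟩
  mul_mem' := by
    rintro e f ⟨x, hxB, hx⟩ ⟨y, hyB, hy⟩
    refine ⟨x * y, by rw [mul_smul, hyB, hxB], fun C => ?_⟩
    rw [Equiv.Perm.mul_apply, hx, hy, mul_smul]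
  inv_mem' := by
    rintro e ⟨x, hxB, hx⟩
    refine ⟨x⁻¹, inv_smul_eq_iff.mpr hxB.symm, fun C => ?_⟩
    have h := hx (e⁻¹ C)
    rw [show e (e⁻¹ C) = C from e.apply_symm_apply C] at h
    rw [eq_inv_smul_iff]
    exact h.symm

/-- The homomorphism from a subgroup stabilizing a set `U` to the permutations of `U`. -/
def permHomOf {α β : Type*} [Group α] [MulAction α β] (S : Subgroup α) (U : Set β)
    (hU : ∀ x ∈ S, x • U = U) : S →* Equiv.Perm ↥U where
  toFun x :=
    { toFun := fun u => ⟨x.1 • u.1, by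
        have h := Set.smul_mem_smul_set (a := x.1) u.2
        rwa [hU x.1 x.2] at h⟩
      invFun := fun u => ⟨x.1⁻¹ • u.1, by
        have h := Set.smul_mem_smul_set (a := x.1⁻¹) u.2
        rwa [hU x.1⁻¹ (inv_mem x.2)] at h⟩
      left_inv := fun u => Subtype.ext (inv_smul_smul _ _)
      right_inv := fun u => Subtype.ext (smul_inv_smul _ _) }
  map_one' := Equiv.ext fun u => Subtype.ext (one_smul _ _)
  map_mul' x y := Equiv.ext fun u => Subtype.ext (mul_smul _ _ _)

lemma mem_nbhd_iff {V : Type*} (Γ : SimpleGraph V) (C : Set V) (u : V) :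
    u ∈ nbhd Γ C ↔ ∃ w ∈ C, Γ.Adj w u := by
  simp [nbhd, SimpleGraph.mem_neighborSet]

lemma adj_smul_iff {V X : Type*} [Group X] [MulAction X V] {Γ : SimpleGraph V}
    (hA : AdjPres X Γ) (x : X) (u w : V) : Γ.Adj (x • u) (x • w) ↔ Γ.Adj u w := by
  constructor
  · intro h
    have := hA x⁻¹ _ _ h
    simpa using this
  · exact hA x u w

lemma smul_nbhd {V X : Type*} [Group X] [MulAction X V] {Γ : SimpleGraph V}
    (hA : AdjPres X Γ) (x : X) (C : Set V) : x • nbhd Γ C = nbhd Γ (x • C) := by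
  ext v
  rw [Set.mem_smul_set_iff_inv_smul_mem, mem_nbhd_iff, mem_nbhd_iff]
  constructor
  · rintro ⟨w, hw, hadj⟩
    refine ⟨x • w, Set.smul_mem_smul_set hw, ?_⟩
    have := hA x _ _ hadj
    rwa [smul_inv_smul] at this
  · rintro ⟨w', hw', hadj⟩
    obtain ⟨w, hw, rfl⟩ := hw'
    refine ⟨w, hw, ?_⟩
    have := hA x⁻¹ _ _ hadj
    rwa [inv_smul_smul] at this

/-- Let `Γ` be a finite `X`-symmetric graph with a nontrivial
`X`-invariant partition `P` such that the quotient has valency at least 2 and `Γ` is not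
a multicover of the quotient, and let `B ∈ P`.  If `m*(Γ,P) = 1` and `m(D(B)) = 1`, then
the permutation group induced by the setwise stabilizer `X_B` on `B` is isomorphic to the
permutation group induced by `X_B` on the set of blocks adjacent to `B`. -/
theorem induced_on_block_iso_induced_on_neighbours {V X : Type*} [Fintype V] [Group X]
    [MulAction X V] (Γ : SimpleGraph V) (hsym : XSymm X Γ)
    (P : Set (Set V)) (hP : XInvariantPartition X P) (hPnt : NontrivialBlocks P)
    (b : ℕ) (hb : 2 ≤ b) (hqreg : Regular (quotGraph Γ P) b)
    (hnmc : ∀ B C : ↥P, (quotGraph Γ P).Adj B C → nbhd Γ ↑C ∩ ↑B ≠ (↑B : Set V))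
    (B : Set V) (hB : B ∈ P)
    (hmstar : ∀ B' ∈ P, ∀ u ∈ B', (underBlock Γ P B' u).ncard = 1)
    (hmD : ∀ C D : Set V, C ∈ P → D ∈ P → QAdj Γ B C → QAdj Γ B D →
      nbhd Γ C ∩ B = nbhd Γ D ∩ B → C = D) :
    Nonempty (inducedOnSet X B ≃*
      inducedOnBlocks X B {C : Set V | C ∈ P ∧ QAdj Γ B C}) := by
  classical
  obtain ⟨hA, _hVT, _hAT⟩ := hsym
  set N : Set (Set V) := {C : Set V | C ∈ P ∧ QAdj Γ B C} with hN
  set S : Subgroup X := MulAction.stabilizer X B with hS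
  have hmemS : ∀ x : X, x ∈ S ↔ x • B = B := fun x => MulAction.mem_stabilizer_iff
  -- every element of S maps N into N
  have hmapsN : ∀ x ∈ S, ∀ C ∈ N, x • C ∈ N := by
    intro x hx C hC
    rw [hmemS] at hx
    obtain ⟨hCP, hBC, u, hu, w, hw, hadj⟩ := hC
    refine ⟨hP.2 x C hCP, ?_, x • u, ?_, x • w, Set.smul_mem_smul_set hw, hA x u w hadj⟩
    · intro h
      have h1 : x⁻¹ • B = B := inv_smul_eq_iff.mpr hx.symm
      have h2 : x⁻¹ • B = C := by rw [h, inv_smul_smul]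
      rw [h1] at h2
      exact hBC h2
    · rw [← hx]; exact Set.smul_mem_smul_set hu
  have hNstab : ∀ x ∈ S, x • N = N := by
    intro x hx
    apply subset_antisymm
    · rintro _ ⟨C, hC, rfl⟩; exact hmapsN x hx C hC
    · intro C hC
      exact ⟨x⁻¹ • C, hmapsN x⁻¹ (inv_mem hx) C hC, smul_inv_smul x C⟩
  have hBstab : ∀ x ∈ S, x • B = B := fun x hx => (hmemS x).mp hx
  set φ : S →* Equiv.Perm ↥B := permHomOf S B hBstab with hφ
  set ψ : S →* Equiv.Perm ↥N := permHomOf S N hNstab with hψ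
  -- ker φ ≤ ker ψ : fixing B pointwise fixes each neighbouring block
  have hker1 : ∀ x : S, (∀ u ∈ B, x.1 • u = u) → ∀ C ∈ N, x.1 • C = C := by
    intro x hfix C hC
    have hx : x.1 • B = B := hBstab x.1 x.2
    have hxCN : x.1 • C ∈ N := hmapsN x.1 x.2 C hC
    refine hmD (x.1 • C) C hxCN.1 hC.1 hxCN.2 hC.2 ?_
    rw [← smul_nbhd hA]
    ext v
    simp only [Set.mem_inter_iff]
    constructor
    · rintro ⟨hvN, hvB⟩
      obtain ⟨m, hm, hmv⟩ := hvN
      have hmeq : m = v := MulAction.injective x.1 (hmv.trans (hfix v hvB).symm)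
      exact ⟨hmeq ▸ hm, hvB⟩
    · rintro ⟨hvN, hvB⟩
      exact ⟨⟨v, hvN, hfix v hvB⟩, hvB⟩
  -- ker ψ ≤ ker φ : fixing each neighbouring block fixes B pointwise
  have hker2 : ∀ x : S, (∀ C ∈ N, x.1 • C = C) → ∀ u ∈ B, x.1 • u = u := by
    intro x hfix u hu
    have hx : x.1 • B = B := hBstab x.1 x.2
    have huB : u ∈ underBlock Γ P B u := by
      refine ⟨hu, ?_⟩
      simp only [Set.mem_iInter]
      intro C hC
      exact hC.2
    have hone : underBlock Γ P B u = {u} := by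
      obtain ⟨a, ha⟩ := Set.ncard_eq_one.mp (hmstar B hB u hu)
      rw [ha] at huB ⊢
      rw [Set.mem_singleton_iff.mp huB]
    have hxu : x.1 • u ∈ underBlock Γ P B u := by
      refine ⟨by rw [← hx]; exact Set.smul_mem_smul_set hu, ?_⟩
      simp only [Set.mem_iInter]
      rintro C ⟨hCP, hunb⟩
      have hxC : x.1 • C = C := by
        by_cases hCB : C = B
        · rw [hCB]; exact hx
        · refine hfix C ⟨hCP, ?_⟩
          obtain ⟨w, hw, hadj⟩ := (mem_nbhd_iff Γ C u).mp hunb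
          exact ⟨fun h => hCB h.symm, u, hu, w, hw, hadj.symm⟩
      rw [← hxC, ← smul_nbhd hA]
      exact Set.smul_mem_smul_set hunb
    rw [hone] at hxu
    exact hxu
  -- the kernels coincide
  have hkereq : φ.ker = ψ.ker := by
    ext x
    rw [MonoidHom.mem_ker, MonoidHom.mem_ker]
    constructor
    · intro h
      have h' : ∀ u ∈ B, x.1 • u = u := by
        intro u hu
        have := Equiv.ext_iff.mp h ⟨u, hu⟩
        exact congrArg Subtype.val this
      apply Equiv.ext
      intro C
      apply Subtype.ext
      show x.1 • C.1 = C.1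
      exact hker1 x h' C.1 C.2
    · intro h
      have h' : ∀ C ∈ N, x.1 • C = C := by
        intro C hC
        have := Equiv.ext_iff.mp h ⟨C, hC⟩
        exact congrArg Subtype.val this
      apply Equiv.ext
      intro u
      apply Subtype.ext
      show x.1 • u.1 = u.1
      exact hker2 x h' u.1 u.2
  -- ranges are the induced permutation groups
  have hφr : φ.range = inducedOnSet X B := by
    ext e
    constructor
    · rintro ⟨x, rfl⟩
      exact ⟨x.1, hBstab x.1 x.2, fun u => rfl⟩
    · rintro ⟨x, hxB, hxe⟩
      exact ⟨⟨x, (hmemS x).mpr hxB⟩, Equiv.ext fun u => Subtype.ext (hxe u).symm⟩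
  have hψr : ψ.range = inducedOnBlocks X B N := by
    ext e
    constructor
    · rintro ⟨x, rfl⟩
      exact ⟨x.1, hBstab x.1 x.2, fun C => rfl⟩
    · rintro ⟨x, hxB, hxe⟩
      exact ⟨⟨x, (hmemS x).mpr hxB⟩, Equiv.ext fun C => Subtype.ext (hxe C).symm⟩
  exact ⟨(MulEquiv.subgroupCongr hφr).symm.trans
    ((QuotientGroup.quotientKerEquivRange φ).symm.trans
      (((QuotientGroup.quotientMulEquivOfEq hkereq).trans
        (QuotientGroup.quotientKerEquivRange ψ)).trans (MulEquiv.subgroupCongr hψr)))⟩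
end
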